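/- arXiv:1008.4878 — 6 statements merged into one kernel-verified Lean document; each statement's English description precedes it below -/
import Mathlib

section
/- Let (G,j,π,u) be a (ū,Δ)-sectioned iterated extension of (KNP) by (PQR), with i := j∘i₀ and φ := φ̄∘π, and let d ∈ Z^2(R,Z(K)^P). Then the operation m_d(g₁,g₂) := i(d(φ(g₁),φ(g₂)))·g₁·g₂ on the underlying set of G is associative with identity element 1_G, and the m_d-inverse of g is i(θ₀(φ(g))⁻¹(d(φ(g),φ(g)⁻¹))⁻¹)·g⁻¹; denoting the resulting group by d⊠G, the maps j : N → d⊠G and π : d⊠G → Q are group homomorphisms, and (d⊠G,j,π,u) is again a (ū,Δ)-sectioned iterated extension of (KNP) by (PQR). -/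
namespace IES

section OutDef

variable (K : Type*) [Group K]

/-- The subgroup of inner automorphisms of `K` inside `MulAut K`. -/
def Inn : Subgroup (MulAut K) := (MulAut.conj : K →* MulAut K).range

instance : (Inn K).Normal := by
  constructor
  rintro x ⟨k, rfl⟩ η
  refine ⟨η k, ?_⟩
  ext y
  simp [MulAut.conj_apply, MulAut.mul_apply, map_mul, map_inv]

/-- The outer automorphism group `Out K := Aut K / Inn K`. -/
abbrev Out := MulAut K ⧸ Inn K

/-- Canonical projection `Aut K → Out K`. -/
def toOut : MulAut K →* Out K := QuotientGroup.mk' (Inn K)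

lemma center_map (η : K ≃* K) {z : K} (hz : z ∈ Subgroup.center K) :
    η z ∈ Subgroup.center K := by
  rw [Subgroup.mem_center_iff] at hz ⊢
  intro g
  calc g * η z = η (η.symm g * z) := by rw [map_mul, η.apply_symm_apply]
    _ = η (z * η.symm g) := by rw [hz (η.symm g)]
    _ = η z * g := by rw [map_mul, η.apply_symm_apply]

/-- Restriction of automorphisms of `K` to its center. -/
def centerAut : MulAut K →* MulAut (Subgroup.center K) where
  toFun η :=
    { toFun := fun z => ⟨η z.1, center_map K η z.2⟩
      invFun := fun z => ⟨η.symm z.1, center_map K η.symm z.2⟩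
      left_inv := fun z => Subtype.ext (η.symm_apply_apply z.1)
      right_inv := fun z => Subtype.ext (η.apply_symm_apply z.1)
      map_mul' := fun a b => Subtype.ext (map_mul η a.1 b.1) }
  map_one' := by ext z; rfl
  map_mul' := fun a b => by ext z; rfl

lemma centerAut_inn : ∀ x ∈ Inn K, centerAut K x = 1 := by
  rintro x ⟨k, rfl⟩
  ext z
  have hz := z.2
  rw [Subgroup.mem_center_iff] at hz
  show k * z.1 * k⁻¹ = z.1
  rw [hz k, mul_inv_cancel_right]

/-- The action of `Out K` on the center of `K`. -/
def outCenter : Out K →* MulAut (Subgroup.center K) :=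
  QuotientGroup.lift (Inn K) (centerAut K) (centerAut_inn K)

end OutDef

section ModK

variable {K N : Type*} [Group K] [Group N]

/-- The group of automorphisms of `N` stabilizing the image of `K`. -/
def autK (i0 : K →* N) : Subgroup (MulAut N) where
  carrier := {η | ∀ n, η n ∈ i0.range ↔ n ∈ i0.range}
  one_mem' := by intro n; rw [MulAut.one_apply]
  mul_mem' := by
    intro a b ha hb n
    rw [MulAut.mul_apply]
    exact (ha (b n)).trans (hb n)
  inv_mem' := by
    intro a ha n
    have h := ha (a⁻¹ n)
    rw [MulAut.apply_inv_self] at h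
    exact h.symm

lemma mem_autK_iff {i0 : K →* N} {η : MulAut N} :
    η ∈ autK i0 ↔ ∀ n, η n ∈ i0.range ↔ n ∈ i0.range := Iff.rfl

/-- The subgroup of `autK i0` of inner automorphisms induced by elements of `i0 K`. -/
def cInn (i0 : K →* N) : Subgroup (autK i0) where
  carrier := {η | ∃ k : K, (η : MulAut N) = MulAut.conj (i0 k)}
  one_mem' := ⟨1, by simp⟩
  mul_mem' := by
    rintro a b ⟨k1, h1⟩ ⟨k2, h2⟩
    exact ⟨k1 * k2, by rw [Subgroup.coe_mul, h1, h2, ← map_mul, ← map_mul]⟩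
  inv_mem' := by
    rintro a ⟨k, h⟩
    exact ⟨k⁻¹, by rw [Subgroup.coe_inv, h, ← map_inv, ← map_inv]⟩

lemma conj_conj_eq (η : MulAut N) (x : N) :
    η * MulAut.conj x * η⁻¹ = MulAut.conj (η x) := by
  ext y
  simp [MulAut.conj_apply, MulAut.mul_apply, map_mul, map_inv]

instance (i0 : K →* N) : (cInn i0).Normal := by
  constructor
  rintro c ⟨k, hk⟩ g
  obtain ⟨k', hk'⟩ := (g.2 (i0 k)).mpr ⟨k, rfl⟩
  refine ⟨k', ?_⟩
  rw [Subgroup.coe_mul, Subgroup.coe_mul, Subgroup.coe_inv, hk, conj_conj_eq, hk']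

/-- The mod-`K` outer automorphism group `Out(N;K)`. -/
abbrev OutNK (i0 : K →* N) := ↥(autK i0) ⧸ cInn i0

/-- Canonical projection onto the mod-`K` outer automorphism group. -/
def mkNK (i0 : K →* N) : ↥(autK i0) →* OutNK i0 := QuotientGroup.mk' (cInn i0)

end ModK


section Cocycles

variable {K P Q R : Type*} [Group K] [Group P] [Group Q] [Group R]

/-- Normalized 1-cocycles of `Q` with values in `Z(K)`, for the action induced by `θ`. -/
def IsZ1Q (θ : Q →* Out K) (lam : Q → ↥(Subgroup.center K)) : Prop :=
  lam 1 = 1 ∧ ∀ q1 q2 : Q, lam (q1 * q2) = lam q1 * outCenter K (θ q1) (lam q2)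

/-- Normalized 1-cocycles of `P` with values in `Z(K)`, for the action induced by `θ ∘ j̄`. -/
def IsZ1P (θ : Q →* Out K) (jb : P →* Q) (lam : P → ↥(Subgroup.center K)) : Prop :=
  lam 1 = 1 ∧ ∀ p1 p2 : P, lam (p1 * p2) = lam p1 * outCenter K (θ (jb p1)) (lam p2)

/-- Normalized 1-cocycles of `R` with values in `Z(K)^P`, where the action `θ₀` of `R`
is expressed via arbitrary `φ̄`-preimages in `Q`. -/
def IsZ1R (θ : Q →* Out K) (jb : P →* Q) (fb : Q →* R)
    (lam : R → ↥(Subgroup.center K)) : Prop :=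
  lam 1 = 1 ∧
  (∀ (r : R) (p : P), outCenter K (θ (jb p)) (lam r) = lam r) ∧
  ∀ q1 q2 : Q, lam (fb q1 * fb q2) = lam (fb q1) * outCenter K (θ q1) (lam (fb q2))

/-- Normalized 2-cocycles of `R` with values in `Z(K)^P`. -/
def IsZ2R (θ : Q →* Out K) (jb : P →* Q) (fb : Q →* R)
    (d : R → R → ↥(Subgroup.center K)) : Prop :=
  (∀ r : R, d 1 r = 1 ∧ d r 1 = 1) ∧
  (∀ (r1 r2 : R) (p : P), outCenter K (θ (jb p)) (d r1 r2) = d r1 r2) ∧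
  ∀ (q1 : Q) (r2 r3 : R),
    d (fb q1) r2 * d (fb q1 * r2) r3 = outCenter K (θ q1) (d r2 r3) * d (fb q1) (r2 * r3)

/-- The cohomology class of a 1-cocycle of `P` is fixed by the `R`-action. -/
def RFixed (θ : Q →* Out K) (jb : P →* Q) (lam : P → ↥(Subgroup.center K)) : Prop :=
  ∀ q : Q, ∃ z0 : ↥(Subgroup.center K), ∀ p p' : P,
    jb p' = q⁻¹ * jb p * q →
      outCenter K (θ q) (lam p') = z0⁻¹ * outCenter K (θ (jb p)) z0 * lam p

end Cocycles

/-- The twisted multiplication `m_d` on `G` associated with a 2-cochain `d`. -/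
def mD {K Q R N G : Type*} [Group K] [Group Q] [Group R] [Group N] [Group G]
    (i0 : K →* N) (j : N →* G) (π : G →* Q) (fb : Q →* R)
    (d : R → R → ↥(Subgroup.center K)) (g1 g2 : G) : G :=
  (j.comp i0) (d (fb (π g1)) (fb (π g2)) : K) * g1 * g2

/-- The inversion map of the twisted multiplication `m_d`. -/
def vD {K Q R N G : Type*} [Group K] [Group Q] [Group R] [Group N] [Group G]
    (i0 : K →* N) (j : N →* G) (π : G →* Q) (fb : Q →* R) (θ : Q →* Out K)
    (d : R → R → ↥(Subgroup.center K)) (g : G) : G :=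
  (j.comp i0) ((((outCenter K (θ (π g)))⁻¹ (d (fb (π g)) ((fb (π g))⁻¹)))⁻¹ : ↥(Subgroup.center K)) : K) * g⁻¹

/-- Conjugation by any `g : G` of a central element of `K` (embedded via `j ∘ i0`)
is given by the outer action `outCenter K (θ (π g))`. -/
lemma conj_i {K Q N G : Type*} [Group K] [Group Q] [Group N] [Group G]
    (i0 : K →* N) (j : N →* G) (π : G →* Q) (θ : Q →* Out K)
    (hi : Function.Injective ⇑(j.comp i0))
    (hkerπ : (j.comp i0).range = π.ker)
    (hθ : ∀ (g : G) (κ : MulAut K),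
      (∀ k, (j.comp i0) (κ k) = g * (j.comp i0) k * g⁻¹) → θ (π g) = toOut K κ)
    (g : G) (z : ↥(Subgroup.center K)) :
    g * (j.comp i0) (z : K) = (j.comp i0) ((outCenter K (θ (π g)) z : K)) * g := by
  have hπi : ∀ k : K, π ((j.comp i0) k) = 1 := fun k => by
    rw [← MonoidHom.mem_ker, ← hkerπ]; exact ⟨k, rfl⟩
  have hmem : ∀ (g : G) (k : K), g * (j.comp i0) k * g⁻¹ ∈ (j.comp i0).range := by
    intro g k
    rw [hkerπ, MonoidHom.mem_ker, map_mul, map_mul, map_inv, hπi, mul_one,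
      mul_inv_cancel]
  choose f hf using hmem
  let κ : MulAut K :=
    { toFun := f g
      invFun := f g⁻¹
      left_inv := fun k => hi (show (j.comp i0) (f g⁻¹ (f g k)) = (j.comp i0) k by
        rw [hf, hf]; group)
      right_inv := fun k => hi (show (j.comp i0) (f g (f g⁻¹ k)) = (j.comp i0) k by
        rw [hf, hf]; group)
      map_mul' := fun a b => hi
        (show (j.comp i0) (f g (a * b)) = (j.comp i0) (f g a * f g b) by
          rw [map_mul, hf, hf, hf, map_mul]; group) }
  have hκ : θ (π g) = toOut K κ := hθ g κ (fun k => hf g k)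
  have ho : outCenter K (θ (π g)) = centerAut K κ := by rw [hκ]; rfl
  have hcz : (outCenter K (θ (π g)) z : K) = f g (z : K) := by rw [ho]; rfl
  rw [hcz, hf]; group

/-- For a `(ū,Δ)`-sectioned iterated extension `(G,j,π,u)` and a
2-cocycle `d ∈ Z²(R,Z(K)^P)`, the twisted multiplication `m_d` makes the underlying
set of `G` into a group `d⊠G` with identity `1`, inversion `v_d`; `j` and `π` are
again homomorphisms and `(d⊠G,j,π,u)` is again a `(ū,Δ)`-sectioned iterated
extension. -/
theorem statement12
    {K P Q R N G : Type*} [Group K] [Group P] [Group Q] [Group R] [Group N] [Group G]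
    (i0 : K →* N) (π0 : N →* P) (jb : P →* Q) (fb : Q →* R)
    (j : N →* G) (π : G →* Q) (θ : Q →* Out K)
    (hi0 : Function.Injective i0) (hπ0 : Function.Surjective π0)
    (hker0 : i0.range = π0.ker)
    (hjb : Function.Injective jb) (hfb : Function.Surjective fb)
    (hker1 : jb.range = fb.ker)
    (hj : Function.Injective j) (hπ : Function.Surjective π)
    (hcomm : π.comp j = jb.comp π0)
    (hkerφ : j.range = (fb.comp π).ker)
    (hkerπ : (j.comp i0).range = π.ker)
    (hθ : ∀ (g : G) (κ : MulAut K),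
      (∀ k, (j.comp i0) (κ k) = g * (j.comp i0) k * g⁻¹) → θ (π g) = toOut K κ)
    -- the (ū,Δ)-section u
    (ub : R → Q) (hub : ∀ r, fb (ub r) = r) (hub1 : ub 1 = 1)
    (Δ : R → ↥(autK i0)) (hΔ1 : Δ 1 = 1)
    (u : R → G) (hπu : ∀ r, π (u r) = ub r) (hu1 : u 1 = 1)
    (hconj : ∀ (r : R) (n : N), j ((Δ r : MulAut N) n) = u r * j n * (u r)⁻¹)
    -- a normalized 2-cocycle
    (d : R → R → ↥(Subgroup.center K)) (hd : IsZ2R θ jb fb d) :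
    -- m_d is associative
    (∀ g1 g2 g3 : G, mD i0 j π fb d (mD i0 j π fb d g1 g2) g3 =
      mD i0 j π fb d g1 (mD i0 j π fb d g2 g3)) ∧
    -- 1 is a two-sided identity
    (∀ g : G, mD i0 j π fb d 1 g = g ∧ mD i0 j π fb d g 1 = g) ∧
    -- v_d is a two-sided inverse
    (∀ g : G, mD i0 j π fb d g (vD i0 j π fb θ d g) = 1 ∧
      mD i0 j π fb d (vD i0 j π fb θ d g) g = 1) ∧
    -- j : N → d⊠G is a homomorphism
    (∀ n1 n2 : N, mD i0 j π fb d (j n1) (j n2) = j (n1 * n2)) ∧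
    -- π : d⊠G → Q is a homomorphism
    (∀ g1 g2 : G, π (mD i0 j π fb d g1 g2) = π g1 * π g2) ∧
    -- the conjugation action of u r on N inside d⊠G is still Δ r, i.e.
    -- (d⊠G, j, π, u) is again a (ū,Δ)-sectioned iterated extension
    (∀ (r : R) (n : N), mD i0 j π fb d (u r) (j n) =
      mD i0 j π fb d (j ((Δ r : MulAut N) n)) (u r)) := by
  have hi : Function.Injective ⇑(j.comp i0) := by
    intro a b h
    exact hi0 (hj (by simpa using h))
  have hπi : ∀ k : K, π ((j.comp i0) k) = 1 := fun k => by
    rw [← MonoidHom.mem_ker, ← hkerπ]; exact ⟨k, rfl⟩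
  have hC : ∀ (g : G) (z : ↥(Subgroup.center K)),
      g * (j.comp i0) (z : K) = (j.comp i0) ((outCenter K (θ (π g)) z : K)) * g :=
    conj_i i0 j π θ hi hkerπ hθ
  have hzc : ∀ z1 z2 : ↥(Subgroup.center K),
      (j.comp i0) (z1 : K) * (j.comp i0) (z2 : K) =
        (j.comp i0) ((z2 * z1 : ↥(Subgroup.center K)) : K) := by
    intro z1 z2
    rw [← map_mul]
    congr 1
    rw [Subgroup.coe_mul]
    exact Subgroup.mem_center_iff.mp z2.2 (z1 : K)
  have hd1 : ∀ r : R, d 1 r = 1 := fun r => (hd.1 r).1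
  have hd2 : ∀ r : R, d r 1 = 1 := fun r => (hd.1 r).2
  have hπm : ∀ g1 g2 : G, π (mD i0 j π fb d g1 g2) = π g1 * π g2 := by
    intro g1 g2
    unfold mD
    rw [map_mul, map_mul, hπi, one_mul]
  have hπj : ∀ n : N, π (j n) = jb (π0 n) := fun n => DFunLike.congr_fun hcomm n
  have hfbj : ∀ p : P, fb (jb p) = 1 := fun p => by
    rw [← MonoidHom.mem_ker, ← hker1]; exact ⟨p, rfl⟩
  refine ⟨?_, ?_, ?_, ?_, ?_, ?_⟩
  · -- associativity
    intro g1 g2 g3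
    have h12 : fb (π (mD i0 j π fb d g1 g2)) = fb (π g1) * fb (π g2) := by
      rw [hπm, map_mul]
    have h23 : fb (π (mD i0 j π fb d g2 g3)) = fb (π g2) * fb (π g3) := by
      rw [hπm, map_mul]
    simp only [mD] at h12 h23 ⊢
    rw [h12, h23]
    set s1 := fb (π g1) with hs1
    set s2 := fb (π g2) with hs2
    set s3 := fb (π g3) with hs3
    have key := hd.2.2 (π g1) s2 s3
    rw [← hs1] at key
    have step := hC g1 (d s2 s3)
    calc (j.comp i0) ((d (s1 * s2) s3 : ↥(Subgroup.center K)) : K) *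
          ((j.comp i0) ((d s1 s2 : ↥(Subgroup.center K)) : K) * g1 * g2) * g3
        = (j.comp i0) ((d s1 s2 * d (s1 * s2) s3 : ↥(Subgroup.center K)) : K) *
            (g1 * (g2 * g3)) := by
          rw [← hzc]; group
      _ = (j.comp i0) ((outCenter K (θ (π g1)) (d s2 s3) * d s1 (s2 * s3) :
            ↥(Subgroup.center K)) : K) * (g1 * (g2 * g3)) := by rw [key]
      _ = (j.comp i0) ((d s1 (s2 * s3) : ↥(Subgroup.center K)) : K) *
            ((j.comp i0) ((outCenter K (θ (π g1)) (d s2 s3) :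
              ↥(Subgroup.center K)) : K) * g1) * (g2 * g3) := by
          rw [← hzc]; group
      _ = (j.comp i0) ((d s1 (s2 * s3) : ↥(Subgroup.center K)) : K) *
            (g1 * (j.comp i0) ((d s2 s3 : ↥(Subgroup.center K)) : K)) * (g2 * g3) := by
          rw [step]
      _ = (j.comp i0) ((d s1 (s2 * s3) : ↥(Subgroup.center K)) : K) * g1 *
            ((j.comp i0) ((d s2 s3 : ↥(Subgroup.center K)) : K) * g2 * g3) := by
          group
  · -- identity
    intro g
    constructor
    · simp [mD, hd1]
    · simp [mD, hd2]
  · -- inverses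
    intro g
    have hπv : π (vD i0 j π fb θ d g) = (π g)⁻¹ := by
      unfold vD
      rw [map_mul, hπi, one_mul, map_inv]
    have hfv : fb (π (vD i0 j π fb θ d g)) = (fb (π g))⁻¹ := by
      rw [hπv, map_inv]
    have houtz : outCenter K (θ (π g))
        ((outCenter K (θ (π g)))⁻¹ (d (fb (π g)) ((fb (π g))⁻¹))) =
          d (fb (π g)) ((fb (π g))⁻¹) := by
      exact (outCenter K (θ (π g))).apply_symm_apply _
    have hzds : (outCenter K (θ (π g)))⁻¹ (d (fb (π g)) ((fb (π g))⁻¹)) =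
        d ((fb (π g))⁻¹) (fb (π g)) := by
      have key := hd.2.2 (π g) ((fb (π g))⁻¹) (fb (π g))
      rw [mul_inv_cancel, inv_mul_cancel, hd1, hd2, mul_one, mul_one] at key
      exact (outCenter K (θ (π g))).injective (houtz.trans key)
    constructor
    · have step : g * (j.comp i0)
          (((outCenter K (θ (π g)))⁻¹ (d (fb (π g)) ((fb (π g))⁻¹)) :
            ↥(Subgroup.center K)) : K) =
          (j.comp i0) ((d (fb (π g)) ((fb (π g))⁻¹) : ↥(Subgroup.center K)) : K) * g := by
        rw [hC, MulAut.apply_inv_self]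
      unfold mD
      rw [hfv]
      unfold vD
      rw [InvMemClass.coe_inv, map_inv, ← step]
      group
    · unfold mD
      rw [hfv]
      unfold vD
      rw [hzds, InvMemClass.coe_inv, map_inv]
      group
  · -- j is a homomorphism
    intro n1 n2
    simp only [mD]
    rw [hπj, hπj, hfbj, hfbj, hd1, OneMemClass.coe_one, map_one, one_mul, ← map_mul]
  · exact hπm
  · -- section compatibility
    intro r n
    simp only [mD]
    rw [hπu, hub, hπj, hπj, hfbj, hfbj, hd1, hd2, OneMemClass.coe_one,
      map_one, one_mul, one_mul, hconj]
    group

end IES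
end

section
/- For ℓ = 1,2 let (G_ℓ,j_ℓ,π_ℓ,u_ℓ) be (ū,Δ)-sectioned iterated extensions of (KNP) by (PQR), and let f_ℓ : R×R → N be the left factor set characterized by u_ℓ(r₁)·u_ℓ(r₂) = j_ℓ(f_ℓ(r₁,r₂))·u_ℓ(r₁r₂) in G_ℓ for all r₁,r₂ ∈ R. Then the two (ū,Δ)-sectioned iterated extensions are isomorphic (i.e. there exists a group isomorphism ψ : G₁ → G₂ with ψ∘j₁ = j₂, π₂∘ψ = π₁ and ψ∘u₁ = u₂) if and only if f₁ = f₂ as maps R×R → N. -/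
namespace IES

section AuxIES

variable {K P Q R N G1 G2 : Type*} [Group K] [Group P] [Group Q] [Group R] [Group N]
  [Group G1] [Group G2]

/-- Every element of an iterated extension decomposes as `j a * u r`. -/
theorem exists_decomp
    (fb : Q →* R) (ub : R → Q) (hub : ∀ r, fb (ub r) = r)
    (j1 : N →* G1) (π1 : G1 →* Q)
    (hkerφ1 : j1.range = (fb.comp π1).ker)
    (u1 : R → G1) (hπu1 : ∀ r, π1 (u1 r) = ub r)
    (g : G1) : ∃ (a : N) (r : R), g = j1 a * u1 r := by
  have hm : g * (u1 (fb (π1 g)))⁻¹ ∈ j1.range := by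
    rw [hkerφ1]
    show (fb.comp π1) _ = 1
    simp [map_mul, hπu1, hub]
  obtain ⟨a, ha⟩ := hm
  exact ⟨a, fb (π1 g), by rw [ha, inv_mul_cancel_right]⟩

theorem exists_hom
    (i0 : K →* N) (π0 : N →* P) (jb : P →* Q) (fb : Q →* R)
    (hker1 : jb.range = fb.ker)
    (ub : R → Q) (hub : ∀ r, fb (ub r) = r)
    (Δ : R → ↥(autK i0))
    (j1 : N →* G1) (π1 : G1 →* Q) (hj1 : Function.Injective j1)
    (hcomm1 : π1.comp j1 = jb.comp π0)
    (hkerφ1 : j1.range = (fb.comp π1).ker)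
    (u1 : R → G1) (hπu1 : ∀ r, π1 (u1 r) = ub r)
    (hconj1 : ∀ (r : R) (n : N), j1 ((Δ r : MulAut N) n) = u1 r * j1 n * (u1 r)⁻¹)
    (j2 : N →* G2)
    (u2 : R → G2)
    (hconj2 : ∀ (r : R) (n : N), j2 ((Δ r : MulAut N) n) = u2 r * j2 n * (u2 r)⁻¹)
    (f : R → R → N)
    (hf1 : ∀ r1 r2 : R, u1 r1 * u1 r2 = j1 (f r1 r2) * u1 (r1 * r2))
    (hf2 : ∀ r1 r2 : R, u2 r1 * u2 r2 = j2 (f r1 r2) * u2 (r1 * r2)) :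
    ∃ ψ : G1 →* G2, ∀ (a : N) (r : R), ψ (j1 a * u1 r) = j2 a * u2 r := by
  have hπ1j : ∀ n : N, π1 (j1 n) = jb (π0 n) := fun n => DFunLike.congr_fun hcomm1 n
  have hdec : ∀ (a : N) (r : R), fb (π1 (j1 a * u1 r)) = r := by
    intro a r
    have h1 : fb (jb (π0 a)) = 1 := by
      have : jb (π0 a) ∈ fb.ker := hker1 ▸ ⟨π0 a, rfl⟩
      exact this
    rw [map_mul, hπ1j, hπu1, map_mul, h1, one_mul, hub]
  have hmem : ∀ g : G1, ∃ n : N, j1 n = g * (u1 (fb (π1 g)))⁻¹ := by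
    intro g
    have : g * (u1 (fb (π1 g)))⁻¹ ∈ j1.range := by
      rw [hkerφ1]
      show (fb.comp π1) _ = 1
      simp [map_mul, hπu1, hub]
    exact this
  choose n1 hn1 using hmem
  have hspec : ∀ (a : N) (r : R),
      j2 (n1 (j1 a * u1 r)) * u2 (fb (π1 (j1 a * u1 r))) = j2 a * u2 r := by
    intro a r
    have hr := hdec a r
    have ha : n1 (j1 a * u1 r) = a := by
      apply hj1
      rw [hn1, hr, mul_inv_cancel_right]
    rw [ha, hr]
  have hdecomp : ∀ g : G1, g = j1 (n1 g) * u1 (fb (π1 g)) := by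
    intro g
    rw [hn1, inv_mul_cancel_right]
  have key : ∀ (a b : N) (r s : R),
      (j1 a * u1 r) * (j1 b * u1 s) = j1 (a * (Δ r : MulAut N) b * f r s) * u1 (r * s) := by
    intro a b r s
    calc j1 a * u1 r * (j1 b * u1 s)
        = j1 a * (u1 r * j1 b * (u1 r)⁻¹) * (u1 r * u1 s) := by group
      _ = j1 a * j1 ((Δ r : MulAut N) b) * (j1 (f r s) * u1 (r * s)) := by
          rw [← hconj1, hf1]
      _ = j1 (a * (Δ r : MulAut N) b * f r s) * u1 (r * s) := by
          simp [map_mul, mul_assoc]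
  have key2 : ∀ (a b : N) (r s : R),
      (j2 a * u2 r) * (j2 b * u2 s) = j2 (a * (Δ r : MulAut N) b * f r s) * u2 (r * s) := by
    intro a b r s
    calc j2 a * u2 r * (j2 b * u2 s)
        = j2 a * (u2 r * j2 b * (u2 r)⁻¹) * (u2 r * u2 s) := by group
      _ = j2 a * j2 ((Δ r : MulAut N) b) * (j2 (f r s) * u2 (r * s)) := by
          rw [← hconj2, hf2]
      _ = j2 (a * (Δ r : MulAut N) b * f r s) * u2 (r * s) := by
          simp [map_mul, mul_assoc]
  refine ⟨MonoidHom.mk' (fun g => j2 (n1 g) * u2 (fb (π1 g))) ?_, hspec⟩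
  intro g h
  conv_lhs => rw [hdecomp g, hdecomp h, key, hspec]
  rw [← key2]

end AuxIES

/-- Two `(ū,Δ)`-sectioned iterated extensions of `(KNP)` by `(PQR)`
are isomorphic iff their left factor sets coincide. -/
theorem statement13
    {K P Q R N G1 G2 : Type*} [Group K] [Group P] [Group Q] [Group R] [Group N]
    [Group G1] [Group G2]
    (i0 : K →* N) (π0 : N →* P) (jb : P →* Q) (fb : Q →* R)
    (hi0 : Function.Injective i0) (hπ0 : Function.Surjective π0)
    (hker0 : i0.range = π0.ker)
    (hjb : Function.Injective jb) (hfb : Function.Surjective fb)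
    (hker1 : jb.range = fb.ker)
    -- the fixed choices ū and Δ
    (ub : R → Q) (hub : ∀ r, fb (ub r) = r) (hub1 : ub 1 = 1)
    (Δ : R → ↥(autK i0)) (hΔ1 : Δ 1 = 1)
    -- the first sectioned iterated extension
    (j1 : N →* G1) (π1 : G1 →* Q)
    (hj1 : Function.Injective j1) (hπ1 : Function.Surjective π1)
    (hcomm1 : π1.comp j1 = jb.comp π0)
    (hkerφ1 : j1.range = (fb.comp π1).ker)
    (hkerπ1 : (j1.comp i0).range = π1.ker)
    (u1 : R → G1) (hπu1 : ∀ r, π1 (u1 r) = ub r) (hu11 : u1 1 = 1)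
    (hconj1 : ∀ (r : R) (n : N), j1 ((Δ r : MulAut N) n) = u1 r * j1 n * (u1 r)⁻¹)
    -- the second sectioned iterated extension
    (j2 : N →* G2) (π2 : G2 →* Q)
    (hj2 : Function.Injective j2) (hπ2 : Function.Surjective π2)
    (hcomm2 : π2.comp j2 = jb.comp π0)
    (hkerφ2 : j2.range = (fb.comp π2).ker)
    (hkerπ2 : (j2.comp i0).range = π2.ker)
    (u2 : R → G2) (hπu2 : ∀ r, π2 (u2 r) = ub r) (hu21 : u2 1 = 1)
    (hconj2 : ∀ (r : R) (n : N), j2 ((Δ r : MulAut N) n) = u2 r * j2 n * (u2 r)⁻¹)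
    -- the left factor sets
    (f1 : R → R → N)
    (hf1 : ∀ r1 r2 : R, u1 r1 * u1 r2 = j1 (f1 r1 r2) * u1 (r1 * r2))
    (f2 : R → R → N)
    (hf2 : ∀ r1 r2 : R, u2 r1 * u2 r2 = j2 (f2 r1 r2) * u2 (r1 * r2)) :
    (∃ ψ : G1 ≃* G2, (∀ n : N, ψ (j1 n) = j2 n) ∧ (∀ g : G1, π2 (ψ g) = π1 g) ∧
      ∀ r : R, ψ (u1 r) = u2 r) ↔ f1 = f2 := by
  constructor
  · rintro ⟨ψ, hj, hπ, hu⟩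
    funext r1 r2
    apply hj2
    have h := congrArg ψ (hf1 r1 r2)
    rw [map_mul, map_mul, hu, hu, hj, hu, hf2 r1 r2] at h
    exact (mul_right_cancel h).symm
  · intro hf
    subst hf
    obtain ⟨ψ, hψ⟩ := exists_hom i0 π0 jb fb hker1 ub hub Δ j1 π1 hj1 hcomm1 hkerφ1
      u1 hπu1 hconj1 j2 u2 hconj2 f1 hf1 hf2
    obtain ⟨χ, hχ⟩ := exists_hom i0 π0 jb fb hker1 ub hub Δ j2 π2 hj2 hcomm2 hkerφ2
      u2 hπu2 hconj2 j1 u1 hconj1 f1 hf2 hf1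
    have hli : ∀ g : G1, χ (ψ g) = g := by
      intro g
      obtain ⟨a, r, rfl⟩ := exists_decomp fb ub hub j1 π1 hkerφ1 u1 hπu1 g
      rw [hψ, hχ]
    have hri : ∀ g : G2, ψ (χ g) = g := by
      intro g
      obtain ⟨a, r, rfl⟩ := exists_decomp fb ub hub j2 π2 hkerφ2 u2 hπu2 g
      rw [hχ, hψ]
    refine ⟨MulEquiv.mk ⟨ψ, χ, hli, hri⟩ (map_mul ψ), ?_, ?_, ?_⟩
    · intro n
      have h := hψ n 1
      rw [hu11, hu21, mul_one, mul_one] at h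
      exact h
    · intro g
      obtain ⟨a, r, rfl⟩ := exists_decomp fb ub hub j1 π1 hkerφ1 u1 hπu1 g
      show π2 (ψ _) = _
      have h1 : π1 (j1 a) = jb (π0 a) := DFunLike.congr_fun hcomm1 a
      have h2 : π2 (j2 a) = jb (π0 a) := DFunLike.congr_fun hcomm2 a
      rw [hψ, map_mul, map_mul, hπu1, hπu2, h1, h2]
    · intro r
      have h := hψ 1 r
      rw [map_one, map_one, one_mul, one_mul] at h
      exact h

end IES
end

section
/- Let (G,j,π,u) be a (ū,Δ)-sectioned iterated extension of (KNP) by (PQR). Then the map sending d ∈ Z^2(R,Z(K)^P) to the isomorphism class of the (ū,Δ)-sectioned iterated extension (d⊠G,j,π,u) is a well-defined bijection from Z^2(R,Z(K)^P) onto the set of isomorphism classes of (ū,Δ)-sectioned iterated extensions of (KNP) by (PQR); its inverse sends the class of (G',j',π',u') to the 2-cocycle (r₁,r₂) ↦ f'(r₁,r₂)·f(r₁,r₂)⁻¹ (an element of N lying in i₀(Z(K)^P)), where f and f' are the left factor sets of u and u' (u(r₁)·u(r₂) = j(f(r₁,r₂))·u(r₁r₂), and similarly for f'). -/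
namespace IES

section AuxLemmas

lemma outCenter_toOut {K : Type*} [Group K] (κ : MulAut K) :
    outCenter K (toOut K κ) = centerAut K κ := rfl

lemma exists_conjAut {K Q G : Type*} [Group K] [Group Q] [Group G]
    (i : K →* G) (π : G →* Q) (hi : Function.Injective i) (hker : i.range = π.ker)
    (g : G) : ∃ κ : MulAut K, ∀ k, i (κ k) = g * i k * g⁻¹ := by
  have hmem : ∀ (h : G) (k : K), ∃ k', i k' = h * i k * h⁻¹ := by
    intro h k
    have h1 : i k ∈ π.ker := hker ▸ ⟨k, rfl⟩
    have h2 : h * i k * h⁻¹ ∈ π.ker := by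
      rw [MonoidHom.mem_ker] at h1 ⊢
      simp [h1]
    rw [← hker] at h2
    exact h2
  choose c hc using hmem
  refine ⟨{ toFun := c g, invFun := c g⁻¹, left_inv := ?_, right_inv := ?_,
            map_mul' := ?_ }, hc g⟩
  · intro k; apply hi; rw [hc, hc]; group
  · intro k; apply hi; rw [hc, hc]; group
  · intro a b
    apply hi
    show i (c g (a * b)) = i (c g a * c g b)
    rw [hc, map_mul i (c g a) (c g b), hc, hc, map_mul]; group

lemma star_conj {K Q G : Type*} [Group K] [Group Q] [Group G]
    (i : K →* G) (π : G →* Q) (θ : Q →* Out K)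
    (hi : Function.Injective i) (hker : i.range = π.ker)
    (hθ : ∀ (g : G) (κ : MulAut K), (∀ k, i (κ k) = g * i k * g⁻¹) → θ (π g) = toOut K κ)
    (g : G) (z : ↥(Subgroup.center K)) :
    i ((outCenter K (θ (π g)) z : ↥(Subgroup.center K)) : K) = g * i (z : K) * g⁻¹ := by
  obtain ⟨κ, hκ⟩ := exists_conjAut i π hi hker g
  rw [hθ g κ hκ, outCenter_toOut]
  exact hκ z

lemma act_fixed {K P Q R : Type*} [Group K] [Group P] [Group Q] [Group R]
    (θ : Q →* Out K) (jb : P →* Q) (fb : Q →* R) (hker1 : jb.range = fb.ker)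
    (z : ↥(Subgroup.center K)) (hz : ∀ p, outCenter K (θ (jb p)) z = z) (q : Q) :
    ∀ p, outCenter K (θ (jb p)) (outCenter K (θ q) z) = outCenter K (θ q) z := by
  intro p
  have hmem : q⁻¹ * jb p * q ∈ jb.range := by
    rw [hker1, MonoidHom.mem_ker]
    have h1 : fb (jb p) = 1 := by
      rw [← MonoidHom.mem_ker, ← hker1]; exact ⟨p, rfl⟩
    simp [h1]
  obtain ⟨p', hp'⟩ := hmem
  have hq : jb p * q = q * jb p' := by rw [hp']; group
  have h1 : outCenter K (θ (jb p)) (outCenter K (θ q) z)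
      = outCenter K (θ (jb p * q)) z := by rw [map_mul, map_mul]; rfl
  rw [h1, hq, map_mul, map_mul]
  show outCenter K (θ q) (outCenter K (θ (jb p')) z) = _
  rw [hz p']

lemma act_eq {K P Q R : Type*} [Group K] [Group P] [Group Q] [Group R]
    (θ : Q →* Out K) (jb : P →* Q) (fb : Q →* R) (hker1 : jb.range = fb.ker)
    (z : ↥(Subgroup.center K)) (hz : ∀ p, outCenter K (θ (jb p)) z = z)
    (q1 q2 : Q) (h : fb q1 = fb q2) :
    outCenter K (θ q1) z = outCenter K (θ q2) z := by
  have hmem : q1 * q2⁻¹ ∈ jb.range := by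
    rw [hker1, MonoidHom.mem_ker]; simp [h]
  obtain ⟨p, hp⟩ := hmem
  have hq : q1 = jb p * q2 := by rw [hp]; group
  rw [hq, map_mul, map_mul]
  exact act_fixed θ jb fb hker1 z hz q2 p

lemma factor_props {N G R : Type*} [Group N] [Group G] [Group R]
    (j : N →* G) (hj : Function.Injective j)
    (u : R → G) (δ : R → MulAut N)
    (hconj : ∀ r n, j (δ r n) = u r * j n * (u r)⁻¹)
    (f : R → R → N)
    (hf : ∀ r1 r2, u r1 * u r2 = j (f r1 r2) * u (r1 * r2)) :
    (∀ r1 r2 n, f r1 r2 * n = δ r1 (δ r2 ((δ (r1 * r2))⁻¹ n)) * f r1 r2) ∧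
    (∀ r1 r2 r3, f r1 r2 * f (r1 * r2) r3 = δ r1 (f r2 r3) * f r1 (r2 * r3)) := by
  have hjf : ∀ r1 r2, j (f r1 r2) = u r1 * u r2 * (u (r1 * r2))⁻¹ := by
    intro r1 r2; rw [hf r1 r2]; group
  have hn : ∀ r n, j n = u r * j ((δ r)⁻¹ n) * (u r)⁻¹ := by
    intro r n
    have h := hconj r ((δ r)⁻¹ n)
    rwa [MulAut.apply_inv_self] at h
  constructor
  · intro r1 r2 n
    apply hj
    rw [map_mul, map_mul, hjf, hconj, hconj]
    conv_lhs => rw [hn (r1 * r2) n]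
    group
  · intro r1 r2 r3
    have key : j (f r1 r2 * f (r1 * r2) r3) * u (r1 * r2 * r3)
        = j (δ r1 (f r2 r3) * f r1 (r2 * r3)) * u (r1 * (r2 * r3)) := by
      calc j (f r1 r2 * f (r1 * r2) r3) * u (r1 * r2 * r3)
          = j (f r1 r2) * (j (f (r1 * r2) r3) * u ((r1 * r2) * r3)) := by
            rw [map_mul, mul_assoc]
        _ = j (f r1 r2) * (u (r1 * r2) * u r3) := by rw [← hf]
        _ = (j (f r1 r2) * u (r1 * r2)) * u r3 := by rw [mul_assoc]
        _ = (u r1 * u r2) * u r3 := by rw [← hf]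
        _ = u r1 * (j (f r2 r3) * u (r2 * r3)) := by rw [mul_assoc, hf]
        _ = (u r1 * j (f r2 r3) * (u r1)⁻¹) * (u r1 * u (r2 * r3)) := by group
        _ = j (δ r1 (f r2 r3)) * (j (f r1 (r2 * r3)) * u (r1 * (r2 * r3))) := by
            rw [hconj, hf]
        _ = j (δ r1 (f r2 r3) * f r1 (r2 * r3)) * u (r1 * (r2 * r3)) := by
            rw [map_mul, mul_assoc]
    rw [show r1 * r2 * r3 = r1 * (r2 * r3) from mul_assoc r1 r2 r3] at key
    exact hj (mul_right_cancel key)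

lemma factor_one {N G R : Type*} [Group N] [Group G] [Group R]
    (j : N →* G) (hj : Function.Injective j)
    (u : R → G) (hu1 : u 1 = 1)
    (f : R → R → N)
    (hf : ∀ r1 r2, u r1 * u r2 = j (f r1 r2) * u (r1 * r2)) :
    ∀ r, f 1 r = 1 ∧ f r 1 = 1 := by
  intro r
  constructor
  · apply hj
    rw [map_one]
    have h := hf 1 r
    rw [hu1, one_mul, one_mul] at h
    have h2 : j (f 1 r) * u r = 1 * u r := by rw [one_mul, ← h]
    exact mul_right_cancel h2
  · apply hj
    rw [map_one]
    have h := hf r 1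
    rw [hu1, mul_one, mul_one] at h
    have h2 : j (f r 1) * u r = 1 * u r := by rw [one_mul, ← h]
    exact mul_right_cancel h2

end AuxLemmas

/-- For a fixed `(ū,Δ)`-sectioned iterated extension `(G,j,π,u)`,
the map `d ↦ (d⊠G,j,π,u)` is a bijection from `Z²(R,Z(K)^P)` onto the set of
isomorphism classes of `(ū,Δ)`-sectioned iterated extensions of `(KNP)` by `(PQR)`;
the inverse sends `(G',j',π',u')` to the 2-cocycle `(r₁,r₂) ↦ f'(r₁,r₂)·f(r₁,r₂)⁻¹`
formed from the left factor sets. -/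
theorem statement14
    {K P Q R N G : Type*} [Group K] [Group P] [Group Q] [Group R] [Group N] [Group G]
    (i0 : K →* N) (π0 : N →* P) (jb : P →* Q) (fb : Q →* R)
    (j : N →* G) (π : G →* Q) (θ : Q →* Out K)
    (hi0 : Function.Injective i0) (hπ0 : Function.Surjective π0)
    (hker0 : i0.range = π0.ker)
    (hjb : Function.Injective jb) (hfb : Function.Surjective fb)
    (hker1 : jb.range = fb.ker)
    (hj : Function.Injective j) (hπ : Function.Surjective π)
    (hcomm : π.comp j = jb.comp π0)
    (hkerφ : j.range = (fb.comp π).ker)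
    (hkerπ : (j.comp i0).range = π.ker)
    (hθ : ∀ (g : G) (κ : MulAut K),
      (∀ k, (j.comp i0) (κ k) = g * (j.comp i0) k * g⁻¹) → θ (π g) = toOut K κ)
    (ub : R → Q) (hub : ∀ r, fb (ub r) = r) (hub1 : ub 1 = 1)
    (Δ : R → ↥(autK i0)) (hΔ1 : Δ 1 = 1)
    (u : R → G) (hπu : ∀ r, π (u r) = ub r) (hu1 : u 1 = 1)
    (hconj : ∀ (r : R) (n : N), j ((Δ r : MulAut N) n) = u r * j n * (u r)⁻¹) :
    -- well-definedness: for each 2-cocycle d, `(d⊠G,j,π,u)` is again a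
    -- (ū,Δ)-sectioned iterated extension
    (∀ d : R → R → ↥(Subgroup.center K), IsZ2R θ jb fb d →
      (∀ n1 n2 : N, mD i0 j π fb d (j n1) (j n2) = j (n1 * n2)) ∧
      (∀ g1 g2 : G, π (mD i0 j π fb d g1 g2) = π g1 * π g2) ∧
      (∀ (r : R) (n : N), mD i0 j π fb d (u r) (j n) =
        mD i0 j π fb d (j ((Δ r : MulAut N) n)) (u r))) ∧
    -- injectivity: isomorphic twists come from equal cocycles
    (∀ d1 d2 : R → R → ↥(Subgroup.center K), IsZ2R θ jb fb d1 → IsZ2R θ jb fb d2 →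
      (∃ ψ : G → G, Function.Bijective ψ ∧
        (∀ g1 g2 : G, ψ (mD i0 j π fb d1 g1 g2) = mD i0 j π fb d2 (ψ g1) (ψ g2)) ∧
        (∀ n : N, ψ (j n) = j n) ∧ (∀ g : G, π (ψ g) = π g) ∧
        (∀ r : R, ψ (u r) = u r)) →
      d1 = d2) ∧
    -- surjectivity, with the inverse given by the difference of the factor sets
    (∀ (G' : Type*) (_ : Group G') (j' : N →* G') (π' : G' →* Q) (u' : R → G'),
      Function.Injective j' → Function.Surjective π' →
      π'.comp j' = jb.comp π0 →
      j'.range = (fb.comp π').ker →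
      (j'.comp i0).range = π'.ker →
      (∀ r, π' (u' r) = ub r) → u' 1 = 1 →
      (∀ (r : R) (n : N), j' ((Δ r : MulAut N) n) = u' r * j' n * (u' r)⁻¹) →
      ∀ f f' : R → R → N,
        (∀ r1 r2 : R, u r1 * u r2 = j (f r1 r2) * u (r1 * r2)) →
        (∀ r1 r2 : R, u' r1 * u' r2 = j' (f' r1 r2) * u' (r1 * r2)) →
        ∃ d : R → R → ↥(Subgroup.center K), IsZ2R θ jb fb d ∧
          (∀ r1 r2 : R, i0 (d r1 r2 : K) = f' r1 r2 * (f r1 r2)⁻¹) ∧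
          ∃ ψ : G → G', Function.Bijective ψ ∧
            (∀ g1 g2 : G, ψ (mD i0 j π fb d g1 g2) = ψ g1 * ψ g2) ∧
            (∀ n : N, ψ (j n) = j' n) ∧ (∀ g : G, π' (ψ g) = π g) ∧
            (∀ r : R, ψ (u r) = u' r)) := by

  have hi : Function.Injective (j.comp i0) := fun a b h => hi0 (hj h)
  have hπj : ∀ n, π (j n) = jb (π0 n) := fun n => DFunLike.congr_fun hcomm n
  have hfbjb : ∀ p, fb (jb p) = 1 := by
    intro p; rw [← MonoidHom.mem_ker, ← hker1]; exact ⟨p, rfl⟩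
  have hfbj : ∀ n : N, fb (π (j n)) = 1 := by
    intro n; rw [hπj, hfbjb]
  have hfbu : ∀ r, fb (π (u r)) = r := fun r => by rw [hπu, hub]
  have hπi : ∀ k, π (j (i0 k)) = 1 := by
    intro k
    have h : (j.comp i0) k ∈ π.ker := hkerπ ▸ ⟨k, rfl⟩
    simpa [MonoidHom.mem_ker] using h
  have hstar := star_conj (j.comp i0) π θ hi hkerπ hθ
  refine ⟨?_, ?_, ?_⟩
  · -- well-definedness
    rintro d ⟨hnorm, hfix, hcoc⟩
    refine ⟨?_, ?_, ?_⟩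
    · intro n1 n2
      simp only [mD, MonoidHom.comp_apply, hfbj, (hnorm (1 : R)).1,
        OneMemClass.coe_one, map_one, one_mul, map_mul]
    · intro g1 g2
      simp only [mD, MonoidHom.comp_apply, map_mul, hπi, one_mul]
    · intro r n
      simp only [mD, MonoidHom.comp_apply, hfbj, hfbu, (hnorm r).1, (hnorm r).2,
        OneMemClass.coe_one, map_one, one_mul]
      rw [hconj]; group
  · -- injectivity
    rintro d1 d2 hd1 hd2 ⟨ψ, hbij, hmul, hjn, hπψ, huψ⟩
    have hmDj : ∀ (d : R → R → ↥(Subgroup.center K)), (∀ r, d 1 r = 1 ∧ d r 1 = 1) →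
        ∀ (n : N) (g : G), mD i0 j π fb d (j n) g = j n * g := by
      intro d hd n g
      simp only [mD, MonoidHom.comp_apply, hfbj, (hd (fb (π g))).1,
        OneMemClass.coe_one, map_one, one_mul]
    have hψj : ∀ (n : N) (g : G), ψ (j n * g) = j n * ψ g := by
      intro n g
      rw [← hmDj d1 hd1.1 n g, hmul, hjn, hmDj d2 hd2.1]
    funext r1 r2
    have hsplit : ∃ n0 : N, u r1 * u r2 = j n0 * u (r1 * r2) := by
      have hmem : u r1 * u r2 * (u (r1 * r2))⁻¹ ∈ (fb.comp π).ker := by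
        rw [MonoidHom.mem_ker]
        show fb (π (u r1 * u r2 * (u (r1 * r2))⁻¹)) = 1
        simp only [map_mul, map_inv, hfbu]
        group
      rw [← hkerφ] at hmem
      obtain ⟨n0, hn0⟩ := hmem
      exact ⟨n0, by rw [hn0]; group⟩
    obtain ⟨n0, hn0⟩ := hsplit
    have hψu12 : ψ (u r1 * u r2) = u r1 * u r2 := by
      rw [hn0, hψj, huψ]
    have e1 : mD i0 j π fb d1 (u r1) (u r2)
        = j (i0 ((d1 r1 r2 : ↥(Subgroup.center K)) : K)) * (u r1 * u r2) := by
      simp only [mD, MonoidHom.comp_apply, hfbu, mul_assoc]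
    have e2 : mD i0 j π fb d2 (ψ (u r1)) (ψ (u r2))
        = j (i0 ((d2 r1 r2 : ↥(Subgroup.center K)) : K)) * (u r1 * u r2) := by
      rw [huψ, huψ]
      simp only [mD, MonoidHom.comp_apply, hfbu, mul_assoc]
    have key := hmul (u r1) (u r2)
    rw [e1, e2, hψj, hψu12] at key
    exact Subtype.ext (hi0 (hj (mul_right_cancel key)))
  · -- surjectivity
    intro G' iG' j' π' u' hj' hπ' hcomm' hkerφ' hkerπ' hπu' hu1' hconj' f f' hf hf'
    have hπ'j' : ∀ n, π' (j' n) = jb (π0 n) := fun n => DFunLike.congr_fun hcomm' n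
    have hfbu' : ∀ r, fb (π' (u' r)) = r := fun r => by rw [hπu', hub]
    obtain ⟨δ, hδ⟩ : ∃ δ : R → MulAut N, ∀ r, δ r = (Δ r : MulAut N) := ⟨_, fun _ => rfl⟩
    have hconjδ : ∀ r n, j (δ r n) = u r * j n * (u r)⁻¹ := by
      intro r n; rw [hδ]; exact hconj r n
    have hconjδ' : ∀ r n, j' (δ r n) = u' r * j' n * (u' r)⁻¹ := by
      intro r n; rw [hδ]; exact hconj' r n
    obtain ⟨hBf, hFf⟩ := factor_props j hj u δ hconjδ f hf
    obtain ⟨hBf', hFf'⟩ := factor_props j' hj' u' δ hconjδ' f' hf'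
    have hnormf := factor_one j hj u hu1 f hf
    have hnormf' := factor_one j' hj' u' hu1' f' hf'
    have hcent : ∀ r1 r2 n, f' r1 r2 * (f r1 r2)⁻¹ * n = n * (f' r1 r2 * (f r1 r2)⁻¹) := by
      intro r1 r2 n
      obtain ⟨m, hm⟩ : ∃ m : N, m = δ (r1 * r2) ((δ r2)⁻¹ ((δ r1)⁻¹ n)) := ⟨_, rfl⟩
      have hBm : δ r1 (δ r2 ((δ (r1 * r2))⁻¹ m)) = n := by
        rw [hm]
        simp only [MulAut.inv_apply_self, MulAut.apply_inv_self]
      have h1 : f r1 r2 * m = n * f r1 r2 := by rw [hBf r1 r2 m, hBm]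
      have h2 : f' r1 r2 * m = n * f' r1 r2 := by rw [hBf' r1 r2 m, hBm]
      have h3 : (f r1 r2)⁻¹ * n = m * (f r1 r2)⁻¹ := by
        calc (f r1 r2)⁻¹ * n = (f r1 r2)⁻¹ * (n * f r1 r2) * (f r1 r2)⁻¹ := by group
          _ = (f r1 r2)⁻¹ * (f r1 r2 * m) * (f r1 r2)⁻¹ := by rw [h1]
          _ = m * (f r1 r2)⁻¹ := by group
      calc f' r1 r2 * (f r1 r2)⁻¹ * n = f' r1 r2 * ((f r1 r2)⁻¹ * n) := by group
        _ = f' r1 r2 * (m * (f r1 r2)⁻¹) := by rw [h3]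
        _ = (f' r1 r2 * m) * (f r1 r2)⁻¹ := by group
        _ = (n * f' r1 r2) * (f r1 r2)⁻¹ := by rw [h2]
        _ = n * (f' r1 r2 * (f r1 r2)⁻¹) := by group
    have hjfG : ∀ r1 r2, j (f r1 r2) = u r1 * u r2 * (u (r1 * r2))⁻¹ := by
      intro r1 r2; rw [hf r1 r2]; group
    have hjfG' : ∀ r1 r2, j' (f' r1 r2) = u' r1 * u' r2 * (u' (r1 * r2))⁻¹ := by
      intro r1 r2; rw [hf' r1 r2]; group
    have hπ0f : ∀ r1 r2, π0 (f r1 r2) = π0 (f' r1 r2) := by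
      intro r1 r2
      apply hjb
      have hA : jb (π0 (f r1 r2)) = ub r1 * ub r2 * (ub (r1 * r2))⁻¹ := by
        rw [← hπj, hjfG, map_mul, map_mul, map_inv, hπu, hπu, hπu]
      have hB : jb (π0 (f' r1 r2)) = ub r1 * ub r2 * (ub (r1 * r2))⁻¹ := by
        rw [← hπ'j', hjfG', map_mul, map_mul, map_inv, hπu', hπu', hπu']
      rw [hA, hB]
    have hrange : ∀ r1 r2, ∃ k : K, i0 k = f' r1 r2 * (f r1 r2)⁻¹ := by
      intro r1 r2
      have hmem : f' r1 r2 * (f r1 r2)⁻¹ ∈ π0.ker := by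
        rw [MonoidHom.mem_ker, map_mul, map_inv, ← hπ0f]
        simp
      rw [← hker0] at hmem
      obtain ⟨k, hk⟩ := hmem
      exact ⟨k, hk⟩
    choose kk hkk using hrange
    have hcentk : ∀ r1 r2, kk r1 r2 ∈ Subgroup.center K := by
      intro r1 r2
      rw [Subgroup.mem_center_iff]
      intro g
      apply hi0
      rw [map_mul, map_mul, hkk]
      exact (hcent r1 r2 (i0 g)).symm
    obtain ⟨d, hdcoe⟩ : ∃ d : R → R → ↥(Subgroup.center K),
        ∀ r1 r2, ((d r1 r2 : ↥(Subgroup.center K)) : K) = kk r1 r2 :=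
      ⟨fun r1 r2 => ⟨kk r1 r2, hcentk r1 r2⟩, fun _ _ => rfl⟩
    have hi0d : ∀ r1 r2, i0 ((d r1 r2 : ↥(Subgroup.center K)) : K)
        = f' r1 r2 * (f r1 r2)⁻¹ := by
      intro r1 r2; rw [hdcoe, hkk]
    have hdfix : ∀ r1 r2 p, outCenter K (θ (jb p)) (d r1 r2) = d r1 r2 := by
      intro r1 r2 p
      obtain ⟨n, rfl⟩ := hπ0 p
      apply Subtype.ext
      apply hi0
      apply hj
      have key := hstar (j n) (d r1 r2)
      rw [hπj n] at key
      simp only [MonoidHom.comp_apply] at key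
      rw [key, hi0d, ← map_mul, ← map_inv, ← map_mul, ← hcent r1 r2 n,
        mul_inv_cancel_right]
    have hE : ∀ r1 r2 r3,
        f' r1 r2 * (f r1 r2)⁻¹ * (f' (r1 * r2) r3 * (f (r1 * r2) r3)⁻¹)
          = δ r1 (f' r2 r3 * (f r2 r3)⁻¹) * (f' r1 (r2 * r3) * (f r1 (r2 * r3))⁻¹) := by
      intro r1 r2 r3
      have s1 : f' r1 r2 * (f r1 r2)⁻¹ * (f' (r1 * r2) r3 * (f (r1 * r2) r3)⁻¹)
          * (f r1 r2 * f (r1 * r2) r3) = f' r1 r2 * f' (r1 * r2) r3 := by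
        calc f' r1 r2 * (f r1 r2)⁻¹ * (f' (r1 * r2) r3 * (f (r1 * r2) r3)⁻¹)
              * (f r1 r2 * f (r1 * r2) r3)
            = f' r1 r2 * (f r1 r2)⁻¹
              * ((f' (r1 * r2) r3 * (f (r1 * r2) r3)⁻¹) * f r1 r2)
              * f (r1 * r2) r3 := by group
          _ = f' r1 r2 * (f r1 r2)⁻¹
              * (f r1 r2 * (f' (r1 * r2) r3 * (f (r1 * r2) r3)⁻¹))
              * f (r1 * r2) r3 := by rw [hcent (r1 * r2) r3 (f r1 r2)]
          _ = f' r1 r2 * f' (r1 * r2) r3 := by group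
      have s2 : δ r1 (f' r2 r3 * (f r2 r3)⁻¹) * (f' r1 (r2 * r3) * (f r1 (r2 * r3))⁻¹)
          * (f r1 r2 * f (r1 * r2) r3) = f' r1 r2 * f' (r1 * r2) r3 := by
        rw [hFf r1 r2 r3, map_mul, map_inv]
        calc δ r1 (f' r2 r3) * (δ r1 (f r2 r3))⁻¹
              * (f' r1 (r2 * r3) * (f r1 (r2 * r3))⁻¹)
              * (δ r1 (f r2 r3) * f r1 (r2 * r3))
            = δ r1 (f' r2 r3) * (δ r1 (f r2 r3))⁻¹
              * ((f' r1 (r2 * r3) * (f r1 (r2 * r3))⁻¹) * δ r1 (f r2 r3))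
              * f r1 (r2 * r3) := by group
          _ = δ r1 (f' r2 r3) * (δ r1 (f r2 r3))⁻¹
              * (δ r1 (f r2 r3) * (f' r1 (r2 * r3) * (f r1 (r2 * r3))⁻¹))
              * f r1 (r2 * r3) := by rw [hcent r1 (r2 * r3) (δ r1 (f r2 r3))]
          _ = δ r1 (f' r2 r3) * f' r1 (r2 * r3) := by group
          _ = f' r1 r2 * f' (r1 * r2) r3 := (hFf' r1 r2 r3).symm
      apply mul_right_cancel (b := f r1 r2 * f (r1 * r2) r3)
      rw [s1, s2]
    have hact : ∀ (q1 : Q) (r2 r3 : R),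
        i0 ((outCenter K (θ q1) (d r2 r3) : ↥(Subgroup.center K)) : K)
          = δ (fb q1) (f' r2 r3 * (f r2 r3)⁻¹) := by
      intro q1 r2 r3
      have heq : outCenter K (θ q1) (d r2 r3)
          = outCenter K (θ (ub (fb q1))) (d r2 r3) :=
        act_eq θ jb fb hker1 (d r2 r3) (hdfix r2 r3) q1 (ub (fb q1)) (by rw [hub])
      rw [heq]
      apply hj
      have key := hstar (u (fb q1)) (d r2 r3)
      rw [hπu] at key
      simp only [MonoidHom.comp_apply] at key
      rw [key, hi0d, ← hconjδ]
    refine ⟨d, ⟨?_, hdfix, ?_⟩, fun r1 r2 => hi0d r1 r2, ?_⟩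
    · intro r
      constructor
      · apply Subtype.ext
        apply hi0
        rw [hi0d, (hnormf r).1, (hnormf' r).1, OneMemClass.coe_one, map_one]
        simp
      · apply Subtype.ext
        apply hi0
        rw [hi0d, (hnormf r).2, (hnormf' r).2, OneMemClass.coe_one, map_one]
        simp
    · intro q1 r2 r3
      apply Subtype.ext
      apply hi0
      rw [MulMemClass.coe_mul, MulMemClass.coe_mul, map_mul, map_mul, hi0d, hi0d,
        hi0d, hact]
      exact hE (fb q1) r2 r3
    · have hdecG : ∀ g : G, ∃ n : N, j n = g * (u (fb (π g)))⁻¹ := by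
        intro g
        have hmem : g * (u (fb (π g)))⁻¹ ∈ (fb.comp π).ker := by
          rw [MonoidHom.mem_ker]
          show fb (π (g * (u (fb (π g)))⁻¹)) = 1
          rw [map_mul, map_inv, hπu, map_mul, map_inv, hub]
          simp
        rw [← hkerφ] at hmem
        obtain ⟨n, hn⟩ := hmem
        exact ⟨n, hn⟩
      choose ν hν using hdecG
      have hdecG' : ∀ g' : G', ∃ n : N, j' n = g' * (u' (fb (π' g')))⁻¹ := by
        intro g'
        have hmem : g' * (u' (fb (π' g')))⁻¹ ∈ (fb.comp π').ker := by
          rw [MonoidHom.mem_ker]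
          show fb (π' (g' * (u' (fb (π' g')))⁻¹)) = 1
          rw [map_mul, map_inv, hπu', map_mul, map_inv, hub]
          simp
        rw [← hkerφ'] at hmem
        obtain ⟨n, hn⟩ := hmem
        exact ⟨n, hn⟩
      choose ν' hν' using hdecG'
      have hgeq : ∀ g, g = j (ν g) * u (fb (π g)) := by
        intro g; rw [hν]; group
      have hgeq' : ∀ g', g' = j' (ν' g') * u' (fb (π' g')) := by
        intro g'; rw [hν']; group
      obtain ⟨ψ, hψdef⟩ : ∃ ψ : G → G', ∀ g, ψ g = j' (ν g) * u' (fb (π g)) :=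
        ⟨_, fun _ => rfl⟩
      obtain ⟨χ, hχdef⟩ : ∃ χ : G' → G, ∀ g', χ g' = j (ν' g') * u (fb (π' g')) :=
        ⟨_, fun _ => rfl⟩
      have hπ'ψ : ∀ g, π' (ψ g) = π g := by
        intro g
        rw [hψdef, map_mul, hπ'j', hπu']
        conv_rhs => rw [hgeq g]
        rw [map_mul, hπj, hπu]
      have hπχ : ∀ g', π (χ g') = π' g' := by
        intro g'
        rw [hχdef, map_mul, hπj, hπu]
        conv_rhs => rw [hgeq' g']
        rw [map_mul, hπ'j', hπu']
      have hχψ : ∀ g, χ (ψ g) = g := by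
        intro g
        have h1 : ν' (ψ g) = ν g := by
          apply hj'
          rw [hν' (ψ g), hπ'ψ, hψdef]
          group
        rw [hχdef, h1, hπ'ψ]
        exact (hgeq g).symm
      have hψχ : ∀ g', ψ (χ g') = g' := by
        intro g'
        have h1 : ν (χ g') = ν' g' := by
          apply hj
          rw [hν (χ g'), hπχ, hχdef]
          group
        rw [hψdef, h1, hπχ]
        exact (hgeq' g').symm
      have hψjn : ∀ n, ψ (j n) = j' n := by
        intro n
        have h1 : ν (j n) = n := by
          apply hj
          rw [hν (j n), hfbj, hu1]
          group
        rw [hψdef, h1, hfbj, hu1']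
        group
      have hψu : ∀ r, ψ (u r) = u' r := by
        intro r
        have h1 : ν (u r) = 1 := by
          apply hj
          rw [hν (u r), hfbu, map_one]
          group
        rw [hψdef, h1, hfbu, map_one, one_mul]
      have hmulψ : ∀ g1 g2, ψ (mD i0 j π fb d g1 g2) = ψ g1 * ψ g2 := by
        intro g1 g2
        have hg12 : g1 * g2
            = j (ν g1 * δ (fb (π g1)) (ν g2) * f (fb (π g1)) (fb (π g2)))
              * u (fb (π g1) * fb (π g2)) := by
          conv_lhs => rw [hgeq g1, hgeq g2]
          calc j (ν g1) * u (fb (π g1)) * (j (ν g2) * u (fb (π g2)))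
              = j (ν g1) * (u (fb (π g1)) * j (ν g2) * (u (fb (π g1)))⁻¹)
                * (u (fb (π g1)) * u (fb (π g2))) := by group
            _ = j (ν g1) * j (δ (fb (π g1)) (ν g2))
                * (j (f (fb (π g1)) (fb (π g2))) * u (fb (π g1) * fb (π g2))) := by
                rw [← hconjδ, hf]
            _ = _ := by rw [map_mul, map_mul]; group
        have hg12' : ψ g1 * ψ g2
            = j' (ν g1 * δ (fb (π g1)) (ν g2) * f' (fb (π g1)) (fb (π g2)))
              * u' (fb (π g1) * fb (π g2)) := by
          rw [hψdef g1, hψdef g2]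
          calc j' (ν g1) * u' (fb (π g1)) * (j' (ν g2) * u' (fb (π g2)))
              = j' (ν g1) * (u' (fb (π g1)) * j' (ν g2) * (u' (fb (π g1)))⁻¹)
                * (u' (fb (π g1)) * u' (fb (π g2))) := by group
            _ = j' (ν g1) * j' (δ (fb (π g1)) (ν g2))
                * (j' (f' (fb (π g1)) (fb (π g2))) * u' (fb (π g1) * fb (π g2))) := by
                rw [← hconjδ', hf']
            _ = _ := by rw [map_mul, map_mul]; group
        have hmdeq : mD i0 j π fb d g1 g2
            = j (i0 (kk (fb (π g1)) (fb (π g2)))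
                * (ν g1 * δ (fb (π g1)) (ν g2) * f (fb (π g1)) (fb (π g2))))
              * u (fb (π g1) * fb (π g2)) := by
          simp only [mD, MonoidHom.comp_apply, hdcoe]
          rw [mul_assoc, hg12, ← mul_assoc, ← map_mul]
        have hπmd : fb (π (mD i0 j π fb d g1 g2)) = fb (π g1) * fb (π g2) := by
          rw [hmdeq, map_mul, hπj, hπu, map_mul, hfbjb, hub, one_mul]
        have hνmd : ν (mD i0 j π fb d g1 g2)
            = i0 (kk (fb (π g1)) (fb (π g2)))
              * (ν g1 * δ (fb (π g1)) (ν g2) * f (fb (π g1)) (fb (π g2))) := by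
          apply hj
          rw [hν, hπmd, hmdeq]
          group
        rw [hψdef, hνmd, hπmd, hg12']
        have hNeq : i0 (kk (fb (π g1)) (fb (π g2)))
            * (ν g1 * δ (fb (π g1)) (ν g2) * f (fb (π g1)) (fb (π g2)))
            = ν g1 * δ (fb (π g1)) (ν g2) * f' (fb (π g1)) (fb (π g2)) := by
          rw [hkk]
          calc f' (fb (π g1)) (fb (π g2)) * (f (fb (π g1)) (fb (π g2)))⁻¹
                * (ν g1 * δ (fb (π g1)) (ν g2) * f (fb (π g1)) (fb (π g2)))
              = (f' (fb (π g1)) (fb (π g2)) * (f (fb (π g1)) (fb (π g2)))⁻¹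
                  * (ν g1 * δ (fb (π g1)) (ν g2))) * f (fb (π g1)) (fb (π g2)) := by
                group
            _ = ((ν g1 * δ (fb (π g1)) (ν g2))
                  * (f' (fb (π g1)) (fb (π g2)) * (f (fb (π g1)) (fb (π g2)))⁻¹))
                  * f (fb (π g1)) (fb (π g2)) := by
                rw [hcent (fb (π g1)) (fb (π g2)) (ν g1 * δ (fb (π g1)) (ν g2))]
            _ = ν g1 * δ (fb (π g1)) (ν g2) * f' (fb (π g1)) (fb (π g2)) := by group
        rw [hNeq]
      exact ⟨ψ, Function.bijective_iff_has_inverse.mpr ⟨χ, hχψ, hψχ⟩, hmulψ, hψjn,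
        hπ'ψ, hψu⟩

end IES
end

section
/- Let (G,j,π) and (G',j',π') be iterated extensions of (KNP) by (PQR) with the same mod-K outer action Θ. Then the Q-main extensions (G,j∘i₀,π) and (G',j'∘i₀,π') are isomorphic as extensions of K by Q if and only if there exists η ∈ Aut(KNP) such that the iterated extensions (G,j∘η,π) and (G',j',π') are isomorphic. -/
namespace IES

/-- Two iterated extensions of `(KNP)` by `(PQR)` with the same
mod-`K` outer action `Θ` have isomorphic `Q`-main extensions iff one becomes
isomorphic to the other after twisting by some automorphism `η ∈ Aut(KNP)`. -/
theorem statement17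
    {K P Q R N G G' : Type*} [Group K] [Group P] [Group Q] [Group R] [Group N]
    [Group G] [Group G']
    (i0 : K →* N) (π0 : N →* P) (jb : P →* Q) (fb : Q →* R)
    (hi0 : Function.Injective i0) (hπ0 : Function.Surjective π0)
    (hker0 : i0.range = π0.ker)
    (hjb : Function.Injective jb) (hfb : Function.Surjective fb)
    (hker1 : jb.range = fb.ker)
    -- the first iterated extension (G,j,π)
    (j : N →* G) (π : G →* Q)
    (hj : Function.Injective j) (hπ : Function.Surjective π)
    (hcomm : π.comp j = jb.comp π0)
    (hkerφ : j.range = (fb.comp π).ker)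
    (hkerπ : (j.comp i0).range = π.ker)
    -- the second iterated extension (G',j',π')
    (j' : N →* G') (π' : G' →* Q)
    (hj' : Function.Injective j') (hπ' : Function.Surjective π')
    (hcomm' : π'.comp j' = jb.comp π0)
    (hkerφ' : j'.range = (fb.comp π').ker)
    (hkerπ' : (j'.comp i0).range = π'.ker)
    -- both have the same mod-K outer action Θ
    (Θ : Q →* OutNK i0)
    (hΘ : ∀ (g : G) (ν : ↥(autK i0)),
      (∀ n : N, j ((ν : MulAut N) n) = g * j n * g⁻¹) → Θ (π g) = mkNK i0 ν)
    (hΘ' : ∀ (g' : G') (ν : ↥(autK i0)),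
      (∀ n : N, j' ((ν : MulAut N) n) = g' * j' n * g'⁻¹) → Θ (π' g') = mkNK i0 ν) :
    -- the Q-main extensions are isomorphic iff some twist of (G,j,π) is isomorphic
    -- to (G',j',π') as an iterated extension
    (∃ ψ : G ≃* G', (∀ k : K, ψ ((j.comp i0) k) = (j'.comp i0) k) ∧
        ∀ g : G, π' (ψ g) = π g) ↔
    (∃ η : MulAut N, (∀ k : K, η (i0 k) = i0 k) ∧ (∀ n : N, π0 (η n) = π0 n) ∧
      ∃ ψ : G ≃* G', (∀ n : N, ψ (j (η n)) = j' n) ∧ ∀ g : G, π' (ψ g) = π g) := by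

  constructor
  · rintro ⟨ψ, hψk, hψπ⟩
    have hπψ : ∀ g' : G', π (ψ.symm g') = π' g' := by
      intro g'
      have := hψπ (ψ.symm g')
      rw [ψ.apply_symm_apply] at this
      exact this.symm
    have hfbjb : ∀ p : P, fb (jb p) = 1 := by
      intro p
      have : jb p ∈ fb.ker := hker1 ▸ ⟨p, rfl⟩
      exact this
    have hπj : ∀ n : N, π (j n) = jb (π0 n) := fun n =>
      DFunLike.congr_fun hcomm n
    have hπ'j' : ∀ n : N, π' (j' n) = jb (π0 n) := fun n =>
      DFunLike.congr_fun hcomm' n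
    have hmem : ∀ n : N, ψ (j n) ∈ j'.range := by
      intro n
      rw [hkerφ']
      show fb (π' (ψ (j n))) = 1
      rw [hψπ, hπj, hfbjb]
    have hmem' : ∀ n : N, ψ.symm (j' n) ∈ j.range := by
      intro n
      rw [hkerφ]
      show fb (π (ψ.symm (j' n))) = 1
      rw [hπψ, hπ'j', hfbjb]
    -- the induced maps on N
    let e : N → N := fun n => (hmem n).choose
    have he : ∀ n : N, j' (e n) = ψ (j n) := fun n => (hmem n).choose_spec
    let e' : N → N := fun n => (hmem' n).choose
    have he' : ∀ n : N, j (e' n) = ψ.symm (j' n) := fun n => (hmem' n).choose_spec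
    have hle : ∀ n : N, e' (e n) = n := by
      intro n
      apply hj
      rw [he', he, ψ.symm_apply_apply]
    have hre : ∀ n : N, e (e' n) = n := by
      intro n
      apply hj'
      rw [he, he', ψ.apply_symm_apply]
    have hmul : ∀ a b : N, e' (a * b) = e' a * e' b := by
      intro a b
      apply hj
      rw [map_mul, he', he', he', map_mul, map_mul]
    let η : MulAut N :=
      { toFun := e', invFun := e, left_inv := hre, right_inv := hle,
        map_mul' := hmul }
    refine ⟨η, ?_, ?_, ψ, ?_, hψπ⟩
    · intro k
      apply hj
      show j (e' (i0 k)) = j (i0 k)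
      rw [he']
      have : ψ (j (i0 k)) = j' (i0 k) := hψk k
      rw [← this, ψ.symm_apply_apply]
    · intro n
      apply hjb
      show jb (π0 (e' n)) = jb (π0 n)
      rw [← hπj, he', hπψ, hπ'j']
    · intro n
      show ψ (j (e' n)) = j' n
      rw [he', ψ.apply_symm_apply]
  · rintro ⟨η, hηk, hηπ, ψ, hψ, hψπ⟩
    refine ⟨ψ, ?_, hψπ⟩
    intro k
    have := hψ (i0 k)
    rw [hηk k] at this
    exact this

end IES
end

section
/- Let (KNP) be an extension of K by P with outer action θ∘j̄ and mod-K outer action Θ_P, and let Θ : Q → Out(N;K) be a (θ,𝒞_P^Q)-prolongation of Θ_P. Identify H^1(P,Z(K)) with the subgroup Out(KNP;K) of Out(N;K) via the canonical isomorphism [λ] ↦ class of (n ↦ i₀(λ(π₀(n)))·n). Then the map Γ ↦ (q ↦ Γ(φ̄(q))·Θ(q)) is a well-defined bijection from Z^1(R,H^1(P,Z(K))) (normalized 1-cocycles for the R-action on H^1(P,Z(K))) onto the set of all (θ,𝒞_P^Q)-prolongations of Θ_P; its inverse sends a prolongation Θ' to the cocycle r ↦ Θ'(ū(r))·Θ(ū(r))⁻¹,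 for any section ū : R → Q of φ̄ with ū(1) = 1. -/
namespace IES

section Prolongations

variable {K P Q R N : Type*} [Group K] [Group P] [Group Q] [Group R] [Group N]

/-- Membership in `Out(KNP;K)`, the image of `Aut(KNP)` in `Out(N;K)`. -/
def MemOutKNP (i0 : K →* N) (π0 : N →* P) (x : OutNK i0) : Prop :=
  ∃ η : ↥(autK i0), (∀ k : K, (η : MulAut N) (i0 k) = i0 k) ∧
    (∀ n : N, π0 ((η : MulAut N) n) = π0 n) ∧ mkNK i0 η = x

/-- `Θ'` is a `(θ,𝒞_P^Q)`-prolongation of `Θ_P`: it extends `Θ_P`, induces `θ` on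
`Out(K)`, and induces the conjugation action of `Q` on `P`. -/
def IsProlong (i0 : K →* N) (π0 : N →* P) (jb : P →* Q) (θ : Q →* Out K)
    (ΘP : P →* OutNK i0) (Θ' : Q →* OutNK i0) : Prop :=
  (∀ p : P, Θ' (jb p) = ΘP p) ∧
  (∀ (q : Q) (ν : ↥(autK i0)) (κ : MulAut K), mkNK i0 ν = Θ' q →
    (∀ k, i0 (κ k) = (ν : MulAut N) (i0 k)) → θ q = toOut K κ) ∧
  (∀ (q : Q) (ν : ↥(autK i0)), mkNK i0 ν = Θ' q →
    ∀ n : N, jb (π0 ((ν : MulAut N) n)) = q * jb (π0 n) * q⁻¹)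

end Prolongations

section Helpers
variable {K P N : Type*} [Group K] [Group P] [Group N] {i0 : K →* N}

lemma resFun_exists (ν : ↥(autK i0)) (k : K) :
    ∃ k', i0 k' = (ν : MulAut N) (i0 k) :=
  MonoidHom.mem_range.mp ((mem_autK_iff.mp ν.2 (i0 k)).mpr (MonoidHom.mem_range.mpr ⟨k, rfl⟩))

noncomputable def resFun (ν : ↥(autK i0)) (k : K) : K := (resFun_exists ν k).choose

lemma i0_resFun (ν : ↥(autK i0)) (k : K) :
    i0 (resFun ν k) = (ν : MulAut N) (i0 k) := (resFun_exists ν k).choose_spec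

noncomputable def restrictK (hi0 : Function.Injective i0) (ν : ↥(autK i0)) : MulAut K where
  toFun := resFun ν
  invFun := resFun ν⁻¹
  left_inv k := hi0 (by rw [i0_resFun, i0_resFun]; simp)
  right_inv k := hi0 (by rw [i0_resFun, i0_resFun]; simp)
  map_mul' a b := hi0 (show i0 (resFun ν (a * b)) = i0 (resFun ν a * resFun ν b) by
    rw [i0_resFun, map_mul i0, map_mul, map_mul i0, i0_resFun, i0_resFun])

lemma i0_restrictK (hi0 : Function.Injective i0) (ν : ↥(autK i0)) (k : K) :
    i0 (restrictK hi0 ν k) = (ν : MulAut N) (i0 k) := i0_resFun ν k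

lemma mkNK_eq_iff {ν ν' : ↥(autK i0)} :
    mkNK i0 ν = mkNK i0 ν' ↔
      ∃ k0 : K, (ν' : MulAut N) = (ν : MulAut N) * MulAut.conj (i0 k0) := by
  constructor
  · intro h
    obtain ⟨c, hc, hmul⟩ := (QuotientGroup.mk'_eq_mk' (N := cInn i0)).mp h
    obtain ⟨k0, hk0⟩ := hc
    exact ⟨k0, by rw [← hmul, Subgroup.coe_mul, hk0]⟩
  · rintro ⟨k0, hk0⟩
    have hm : MulAut.conj (i0 k0) ∈ autK i0 := by
      rw [mem_autK_iff]
      intro n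
      simp only [MulAut.conj_apply]
      constructor
      · intro h
        have := mul_mem (mul_mem (inv_mem (⟨k0, rfl⟩ : i0 k0 ∈ i0.range)) h)
          (⟨k0, rfl⟩ : i0 k0 ∈ i0.range)
        simpa [mul_assoc] using this
      · intro h
        exact mul_mem (mul_mem ⟨k0, rfl⟩ h) (inv_mem ⟨k0, rfl⟩)
    have hc : (⟨MulAut.conj (i0 k0), hm⟩ : ↥(autK i0)) ∈ cInn i0 := ⟨k0, rfl⟩
    refine (QuotientGroup.mk'_eq_mk' (N := cInn i0)).mpr ⟨⟨MulAut.conj (i0 k0), hm⟩, hc, ?_⟩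
    ext1
    rw [Subgroup.coe_mul, ← hk0]

lemma toOut_eq_of_mkNK_eq (hi0 : Function.Injective i0) {ν ν' : ↥(autK i0)}
    {κ κ' : MulAut K} (h : mkNK i0 ν = mkNK i0 ν')
    (hκ : ∀ k, i0 (κ k) = (ν : MulAut N) (i0 k))
    (hκ' : ∀ k, i0 (κ' k) = (ν' : MulAut N) (i0 k)) :
    toOut K κ = toOut K κ' := by
  obtain ⟨k0, hk0⟩ := mkNK_eq_iff.mp h
  have hfun : κ' = κ * MulAut.conj k0 := by
    ext k
    apply hi0
    rw [hκ', hk0]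
    show (ν : MulAut N) (MulAut.conj (i0 k0) (i0 k)) = i0 (κ (MulAut.conj k0 k))
    rw [MulAut.conj_apply, MulAut.conj_apply, ← map_inv i0, ← map_mul, ← map_mul, ← hκ]
  have h1 : toOut K (MulAut.conj k0) = 1 := (QuotientGroup.eq_one_iff _).mpr ⟨k0, rfl⟩
  rw [hfun, map_mul, h1, mul_one]

lemma pi0_eq_of_mkNK_eq (π0 : N →* P) (hker0 : i0.range = π0.ker)
    {ν ν' : ↥(autK i0)} (h : mkNK i0 ν = mkNK i0 ν') (n : N) :
    π0 ((ν' : MulAut N) n) = π0 ((ν : MulAut N) n) := by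
  obtain ⟨k0, hk0⟩ := mkNK_eq_iff.mp h
  have h1 : π0 ((ν : MulAut N) (i0 k0)) = 1 := by
    have : (ν : MulAut N) (i0 k0) ∈ i0.range :=
      (mem_autK_iff.mp ν.2 (i0 k0)).mpr ⟨k0, rfl⟩
    rw [hker0] at this
    exact this
  rw [hk0]
  show π0 ((ν : MulAut N) (MulAut.conj (i0 k0) n)) = _
  rw [MulAut.conj_apply, map_mul, map_mul, map_mul, map_mul, map_inv, map_inv, h1]
  group

end Helpers

section Helpers2
variable {K N : Type*} [Group K] [Group N] {i0 : K →* N}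

lemma conj_i0_mem_autK (k0 : K) : MulAut.conj (i0 k0) ∈ autK i0 := by
  rw [mem_autK_iff]
  intro n
  simp only [MulAut.conj_apply]
  constructor
  · intro h
    have := mul_mem (mul_mem (inv_mem (⟨k0, rfl⟩ : i0 k0 ∈ i0.range)) h)
      (⟨k0, rfl⟩ : i0 k0 ∈ i0.range)
    simpa [mul_assoc] using this
  · intro h
    exact mul_mem (mul_mem ⟨k0, rfl⟩ h) (inv_mem ⟨k0, rfl⟩)

end Helpers2


/-- Fixing a `(θ,𝒞_P^Q)`-prolongation `Θ` of `Θ_P` and identifying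
`H¹(P,Z(K))` with `Out(KNP;K) ⊆ Out(N;K)`, the map `Γ ↦ (q ↦ Γ(φ̄ q)·Θ(q))` is a
bijection from the normalized 1-cocycles `Z¹(R, H¹(P,Z(K)))` (for the `R`-action
`r·x = Θ(q)·x·Θ(q)⁻¹`, `φ̄(q) = r`) onto the set of all `(θ,𝒞_P^Q)`-prolongations of
`Θ_P`; its inverse sends `Θ'` to `r ↦ Θ'(ū r)·Θ(ū r)⁻¹` for any section `ū` of `φ̄`. -/
theorem statement18
    {K P Q R N : Type*} [Group K] [Group P] [Group Q] [Group R] [Group N]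
    (i0 : K →* N) (π0 : N →* P) (jb : P →* Q) (fb : Q →* R) (θ : Q →* Out K)
    (hi0 : Function.Injective i0) (hπ0 : Function.Surjective π0)
    (hker0 : i0.range = π0.ker)
    (hjb : Function.Injective jb) (hfb : Function.Surjective fb)
    (hker1 : jb.range = fb.ker)
    -- the extension (KNP) has outer action θ∘j̄
    (hθN : ∀ (n : N) (κ : MulAut K),
      (∀ k, i0 (κ k) = n * i0 k * n⁻¹) → θ (jb (π0 n)) = toOut K κ)
    -- its mod-K outer action Θ_P
    (ΘP : P →* OutNK i0)
    (hΘP : ∀ (n : N) (ν : ↥(autK i0)),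
      (∀ m : N, (ν : MulAut N) m = n * m * n⁻¹) → ΘP (π0 n) = mkNK i0 ν)
    -- a fixed (θ,𝒞_P^Q)-prolongation Θ of Θ_P
    (Θ : Q →* OutNK i0) (hΘ : IsProlong i0 π0 jb θ ΘP Θ) :
    -- well-definedness: each 1-cocycle Γ yields a prolongation Γ ⋄ Θ
    (∀ Γ : R → OutNK i0, Γ 1 = 1 → (∀ r, MemOutKNP i0 π0 (Γ r)) →
      (∀ q1 q2 : Q, Γ (fb q1 * fb q2) = Γ (fb q1) * (Θ q1 * Γ (fb q2) * (Θ q1)⁻¹)) →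
      ∃ Θ' : Q →* OutNK i0, (∀ q, Θ' q = Γ (fb q) * Θ q) ∧
        IsProlong i0 π0 jb θ ΘP Θ') ∧
    -- injectivity
    (∀ Γ1 Γ2 : R → OutNK i0,
      Γ1 1 = 1 → (∀ r, MemOutKNP i0 π0 (Γ1 r)) →
      (∀ q1 q2 : Q, Γ1 (fb q1 * fb q2) = Γ1 (fb q1) * (Θ q1 * Γ1 (fb q2) * (Θ q1)⁻¹)) →
      Γ2 1 = 1 → (∀ r, MemOutKNP i0 π0 (Γ2 r)) →
      (∀ q1 q2 : Q, Γ2 (fb q1 * fb q2) = Γ2 (fb q1) * (Θ q1 * Γ2 (fb q2) * (Θ q1)⁻¹)) →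
      (∀ q : Q, Γ1 (fb q) * Θ q = Γ2 (fb q) * Θ q) → Γ1 = Γ2) ∧
    -- surjectivity
    (∀ Θ' : Q →* OutNK i0, IsProlong i0 π0 jb θ ΘP Θ' →
      ∃ Γ : R → OutNK i0, Γ 1 = 1 ∧ (∀ r, MemOutKNP i0 π0 (Γ r)) ∧
        (∀ q1 q2 : Q, Γ (fb q1 * fb q2) =
          Γ (fb q1) * (Θ q1 * Γ (fb q2) * (Θ q1)⁻¹)) ∧
        ∀ q : Q, Θ' q = Γ (fb q) * Θ q) ∧
    -- the inverse formula, for any section ū of φ̄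
    (∀ (Θ' : Q →* OutNK i0) (Γ : R → OutNK i0),
      IsProlong i0 π0 jb θ ΘP Θ' →
      (∀ q : Q, Θ' q = Γ (fb q) * Θ q) →
      ∀ ub : R → Q, (∀ r, fb (ub r) = r) → ub 1 = 1 →
        ∀ r : R, Γ r = Θ' (ub r) * (Θ (ub r))⁻¹) := by
  obtain ⟨hΘ1, hΘ2, hΘ3⟩ := hΘ
  refine ⟨?_, ?_, ?_, ?_⟩
  -- Part 1: well-definedness
  · intro Γ hΓ1 hΓmem hΓc
    refine ⟨{ toFun := fun q => Γ (fb q) * Θ q,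
              map_one' := by
                show Γ (fb (1:Q)) * Θ 1 = 1
                rw [map_one fb, hΓ1, map_one, one_mul],
              map_mul' := fun q1 q2 => by
                show Γ (fb (q1 * q2)) * Θ (q1 * q2) = Γ (fb q1) * Θ q1 * (Γ (fb q2) * Θ q2)
                rw [map_mul fb, hΓc q1 q2, map_mul Θ]
                group }, fun q => rfl, ?_, ?_, ?_⟩
    · intro p
      have h1 : fb (jb p) = 1 := by
        have h2 : jb p ∈ fb.ker := hker1 ▸ ⟨p, rfl⟩
        exact h2
      show Γ (fb (jb p)) * Θ (jb p) = ΘP p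
      rw [h1, hΓ1, one_mul, hΘ1 p]
    · intro q ν κ hν hκ
      obtain ⟨η, hηfix, hηπ, hηmk⟩ := hΓmem (fb q)
      obtain ⟨ν₀, hν₀⟩ := QuotientGroup.mk'_surjective (cInn i0) (Θ q)
      have hν₀' : mkNK i0 ν₀ = Θ q := hν₀
      have hκ0 : ∀ k, i0 (restrictK hi0 ν₀ k) = (ν₀ : MulAut N) (i0 k) :=
        i0_restrictK hi0 ν₀
      have hmk : mkNK i0 (η * ν₀) = mkNK i0 ν := by
        rw [map_mul, hηmk, hν₀']
        exact hν.symm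
      have hκ0' : ∀ k, i0 (restrictK hi0 ν₀ k)
          = ((η * ν₀ : ↥(autK i0)) : MulAut N) (i0 k) := by
        intro k
        rw [Subgroup.coe_mul, MulAut.mul_apply, ← hκ0 k]
        exact (hηfix (restrictK hi0 ν₀ k)).symm
      have heq := toOut_eq_of_mkNK_eq hi0 hmk.symm hκ hκ0'
      rw [hΘ2 q ν₀ (restrictK hi0 ν₀) hν₀' hκ0]
      exact heq.symm
    · intro q ν hν n
      obtain ⟨η, hηfix, hηπ, hηmk⟩ := hΓmem (fb q)
      obtain ⟨ν₀, hν₀⟩ := QuotientGroup.mk'_surjective (cInn i0) (Θ q)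
      have hν₀' : mkNK i0 ν₀ = Θ q := hν₀
      have hmk : mkNK i0 (η * ν₀) = mkNK i0 ν := by
        rw [map_mul, hηmk, hν₀']
        exact hν.symm
      have h1 : π0 ((ν : MulAut N) n) = π0 ((ν₀ : MulAut N) n) := by
        rw [pi0_eq_of_mkNK_eq π0 hker0 hmk n, Subgroup.coe_mul, MulAut.mul_apply, hηπ]
      rw [h1]
      exact hΘ3 q ν₀ hν₀' n
  -- Part 2: injectivity
  · intro Γ1 Γ2 _ _ _ _ _ _ h
    funext r
    obtain ⟨q, rfl⟩ := hfb r
    exact mul_right_cancel (h q)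
  -- Part 3: surjectivity
  · intro Θ' hpro
    obtain ⟨h1', h2', h3'⟩ := hpro
    have fiber : ∀ q q' : Q, fb q = fb q' → Θ' q * (Θ q)⁻¹ = Θ' q' * (Θ q')⁻¹ := by
      intro q q' hqq
      have hker : q⁻¹ * q' ∈ jb.range := by
        rw [hker1]
        show fb (q⁻¹ * q') = 1
        rw [map_mul, map_inv, hqq, inv_mul_cancel]
      obtain ⟨p, hp⟩ := hker
      have hq' : q' = q * jb p := by rw [hp]; group
      rw [hq', map_mul, map_mul, h1' p, hΘ1 p, mul_inv_rev]
      group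
    have key : ∀ q : Q,
        Θ' (hfb (fb q)).choose * (Θ ((hfb (fb q)).choose))⁻¹ = Θ' q * (Θ q)⁻¹ :=
      fun q => fiber _ q (hfb (fb q)).choose_spec
    refine ⟨fun r => Θ' (hfb r).choose * (Θ ((hfb r).choose))⁻¹, ?_, ?_, ?_, ?_⟩
    · have h := fiber ((hfb 1).choose) 1 (by rw [(hfb 1).choose_spec, map_one])
      rw [map_one, map_one, inv_one, mul_one] at h
      exact h
    · intro r
      obtain ⟨ν', hν'⟩ := QuotientGroup.mk'_surjective (cInn i0) (Θ' ((hfb r).choose))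
      obtain ⟨ν, hν⟩ := QuotientGroup.mk'_surjective (cInn i0) (Θ ((hfb r).choose))
      have hν'' : mkNK i0 ν' = Θ' ((hfb r).choose) := hν'
      have hνm : mkNK i0 ν = Θ ((hfb r).choose) := hν
      have hκ' := i0_restrictK hi0 ν'
      have hκ := i0_restrictK hi0 ν
      have hθ1 : θ ((hfb r).choose) = toOut K (restrictK hi0 ν') :=
        h2' _ ν' _ hν'' hκ'
      have hθ2 : θ ((hfb r).choose) = toOut K (restrictK hi0 ν) :=
        hΘ2 _ ν _ hνm hκ
      have hone : toOut K (restrictK hi0 ν' * (restrictK hi0 ν)⁻¹) = 1 := by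
        rw [map_mul, map_inv, ← hθ1, ← hθ2, mul_inv_cancel]
      obtain ⟨k0, hk0⟩ := (QuotientGroup.eq_one_iff _).mp hone
      have hκinv : ∀ k, ((ν : MulAut N))⁻¹ (i0 k) = i0 ((restrictK hi0 ν)⁻¹ k) := by
        intro k
        have h2 : i0 ((restrictK hi0 ν) ((restrictK hi0 ν)⁻¹ k)) =
            (ν : MulAut N) (i0 ((restrictK hi0 ν)⁻¹ k)) := hκ _
        rw [MulAut.apply_inv_self] at h2
        rw [h2, MulAut.inv_apply_self]
      have hcon : ∀ k, (restrictK hi0 ν') ((restrictK hi0 ν)⁻¹ k) = k0 * k * k0⁻¹ := by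
        intro k
        have h3 := DFunLike.congr_fun hk0 k
        simpa [MulAut.mul_apply, MulAut.conj_apply] using h3.symm
      refine ⟨⟨MulAut.conj (i0 k0), conj_i0_mem_autK k0⟩⁻¹ * ν' * ν⁻¹, ?_, ?_, ?_⟩
      · intro k
        rw [Subgroup.coe_mul, Subgroup.coe_mul, Subgroup.coe_inv, Subgroup.coe_inv,
          MulAut.mul_apply, MulAut.mul_apply, hκinv k, ← hκ', hcon k]
        show (MulAut.conj (i0 k0))⁻¹ (i0 (k0 * k * k0⁻¹)) = i0 k
        rw [MulAut.conj_inv_apply, map_mul, map_mul, map_inv]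
        group
      · intro n
        rw [Subgroup.coe_mul, Subgroup.coe_mul, Subgroup.coe_inv, Subgroup.coe_inv,
          MulAut.mul_apply, MulAut.mul_apply]
        have hπν : π0 ((ν' : MulAut N) (((ν : MulAut N))⁻¹ n)) = π0 n := by
          apply hjb
          rw [h3' _ ν' hν'' _]
          have hBinv : mkNK i0 (ν⁻¹) = Θ (((hfb r).choose)⁻¹) := by
            rw [map_inv, hνm, map_inv]
          have hB := hΘ3 (((hfb r).choose)⁻¹) (ν⁻¹) hBinv n
          rw [Subgroup.coe_inv] at hB
          rw [hB]
          group
        show π0 ((MulAut.conj (i0 k0))⁻¹ ((ν' : MulAut N) (((ν : MulAut N))⁻¹ n))) = π0 n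
        rw [MulAut.conj_inv_apply, map_mul, map_mul, map_inv, hπν]
        have hk0ker : π0 (i0 k0) = 1 := by
          have h4 : i0 k0 ∈ π0.ker := hker0 ▸ ⟨k0, rfl⟩
          exact h4
        rw [hk0ker]
        group
      · have hcinn : mkNK i0 (⟨MulAut.conj (i0 k0), conj_i0_mem_autK k0⟩ : ↥(autK i0)) = 1 :=
          (QuotientGroup.eq_one_iff _).mpr ⟨k0, rfl⟩
        rw [map_mul, map_mul, map_inv, map_inv, hν'', hνm, hcinn, inv_one, one_mul]
    · intro q1 q2
      show Θ' (hfb (fb q1 * fb q2)).choose * (Θ ((hfb (fb q1 * fb q2)).choose))⁻¹ = _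
      rw [← map_mul fb]
      rw [key (q1 * q2)]
      show _ = Θ' (hfb (fb q1)).choose * (Θ ((hfb (fb q1)).choose))⁻¹ *
        (Θ q1 * (Θ' (hfb (fb q2)).choose * (Θ ((hfb (fb q2)).choose))⁻¹) * (Θ q1)⁻¹)
      rw [key q1, key q2, map_mul, map_mul, mul_inv_rev]
      group
    · intro q
      show Θ' q = Θ' (hfb (fb q)).choose * (Θ ((hfb (fb q)).choose))⁻¹ * Θ q
      rw [key q, inv_mul_cancel_right]
  -- Part 4: inverse formula
  · intro Θ' Γ hpro hq ub hub hub1 r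
    have h := hq (ub r)
    rw [hub r] at h
    rw [h, mul_inv_cancel_right]


end IES
end

section
/- Let (G,i,π) and (G',i',π') be extensions of K by Q with the same outer action θ. Let (N,i₀,π₀) and (N',i₀',π₀') be their P-subextensions (N := π⁻¹(j̄(P)), N' := π'⁻¹(j̄(P))) with inclusions j : N ↪ G and j' : N' ↪ G', let Θ : Q → Out(N;K) and Θ' : Q → Out(N';K) be the mod-K outer actions induced by the conjugation actions of G on N and of G' on N', and suppose ψ : N' → N is an isomorphism of extensions of K by P (ψ∘i₀' = i₀ and π₀∘ψ = π₀'). Then Θ and the transported action ψΘ' (defined by ψΘ'(q) := class of ψ∘Σ'∘ψ⁻¹ for any representative Σ' ∈ Aut_K(N') of Θ'(q)) are Aut(KNP)-conjugate — i.e. there exists η ∈ Aut(KNP) with ψΘ'(q) = η̄⁻¹·Θ(q)·η̄ in Out(N;K) for all q ∈ Q, where η̄ is the image of η — if and only if there exists an iterated extension (G',j*,π') of (N,i₀,π₀) by (PQR) having (G',i',π') as its Q-main extension and Θ as its mod-K outer action. -/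
namespace IES

section Helpers

variable {K N N' G' : Type*} [Group K] [Group N] [Group N'] [Group G']

lemma fix_symm {i0 : K →* N} {i0' : K →* N'} (f : N' ≃* N)
    (hf : ∀ k, f (i0' k) = i0 k) (k : K) : f.symm (i0 k) = i0' k := by
  rw [← hf k, f.symm_apply_apply]

lemma range_iff {i0 : K →* N} {i0' : K →* N'} (f : N' ≃* N)
    (hf : ∀ k, f (i0' k) = i0 k) (n' : N') :
    f n' ∈ i0.range ↔ n' ∈ i0'.range := by
  constructor
  · rintro ⟨k, hk⟩
    refine ⟨k, ?_⟩
    have h2 := fix_symm f hf k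
    have : f.symm (f n') = f.symm (i0 k) := by rw [hk]
    rw [f.symm_apply_apply] at this
    rw [this, h2]
  · rintro ⟨k, hk⟩
    exact ⟨k, by rw [← hk, hf]⟩

lemma mem_autK_of_fix (i0 : K →* N) (e : N ≃* N) (he : ∀ k, e (i0 k) = i0 k) :
    (e : MulAut N) ∈ autK i0 := by
  intro n
  constructor
  · rintro ⟨k, hk⟩
    refine ⟨k, ?_⟩
    have h2 := fix_symm (i0 := i0) (i0' := i0) e he k
    have : e.symm (e n) = e.symm (i0 k) := by rw [← hk]
    rw [e.symm_apply_apply] at this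
    rw [this, h2]
  · rintro ⟨k, hk⟩
    exact ⟨k, by rw [← hk]; exact (he k).symm⟩

lemma range_iff_hom {i0 : K →* N} {i' : K →* G'} (f : N →* G')
    (hf : Function.Injective f) (hfi : ∀ k, f (i0 k) = i' k) (n : N) :
    f n ∈ i'.range ↔ n ∈ i0.range := by
  constructor
  · rintro ⟨k, hk⟩
    refine ⟨k, hf ?_⟩
    rw [hfi, hk]
  · rintro ⟨k, hk⟩
    exact ⟨k, by rw [← hk, hfi]⟩

lemma conj_i0_mem (i0 : K →* N) (k : K) : MulAut.conj (i0 k) ∈ autK i0 := by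
  intro n
  constructor
  · rintro ⟨k', hk'⟩
    refine ⟨k⁻¹ * k' * k, ?_⟩
    have : i0 k' = i0 k * n * (i0 k)⁻¹ := hk'
    rw [map_mul, map_mul, map_inv, this]
    group
  · rintro ⟨k', hk'⟩
    refine ⟨k * k' * k⁻¹, ?_⟩
    show i0 (k * k' * k⁻¹) = i0 k * n * (i0 k)⁻¹
    rw [map_mul, map_mul, map_inv, hk']

end Helpers

/-- Let `(G,i,π)` and `(G',i',π')` be extensions of `K` by `Q`
with the same outer action `θ`, with `P`-subextensions `(N,i₀,π₀)` and `(N',i₀',π₀')`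
(inclusions `j`, `j'`), mod-`K` outer actions `Θ`, `Θ'`, and let `ψ : N' ≃ N` be an
isomorphism of extensions of `K` by `P`.  Then `Θ` and the transported action `ψΘ'`
are `Aut(KNP)`-conjugate iff there exists an iterated extension `(G',j*,π')` of
`(N,i₀,π₀)` by `(PQR)` with `Q`-main extension `(G',i',π')` and mod-`K` outer action
`Θ`. -/
theorem statement19
    {K P Q R N N' G G' : Type*} [Group K] [Group P] [Group Q] [Group R] [Group N]
    [Group N'] [Group G] [Group G']
    (jb : P →* Q) (fb : Q →* R)
    (hjb : Function.Injective jb) (hfb : Function.Surjective fb)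
    (hker1 : jb.range = fb.ker)
    (θ : Q →* Out K)
    -- the extension (G,i,π), its P-subextension (N,i₀,π₀) with inclusion j
    (i : K →* G) (π : G →* Q)
    (hi : Function.Injective i) (hπ : Function.Surjective π) (hker : i.range = π.ker)
    (hθG : ∀ (g : G) (κ : MulAut K),
      (∀ k, i (κ k) = g * i k * g⁻¹) → θ (π g) = toOut K κ)
    (i0 : K →* N) (π0 : N →* P)
    (hi0 : Function.Injective i0) (hπ0 : Function.Surjective π0)
    (hker0 : i0.range = π0.ker)
    (j : N →* G) (hj : Function.Injective j)
    (hji : j.comp i0 = i) (hjc : π.comp j = jb.comp π0)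
    (hjr : j.range = (fb.comp π).ker)
    -- the extension (G',i',π'), its P-subextension (N',i₀',π₀') with inclusion j'
    (i' : K →* G') (π' : G' →* Q)
    (hi' : Function.Injective i') (hπ' : Function.Surjective π')
    (hker' : i'.range = π'.ker)
    (hθG' : ∀ (g' : G') (κ : MulAut K),
      (∀ k, i' (κ k) = g' * i' k * g'⁻¹) → θ (π' g') = toOut K κ)
    (i0' : K →* N') (π0' : N' →* P)
    (hi0' : Function.Injective i0') (hπ0' : Function.Surjective π0')
    (hker0' : i0'.range = π0'.ker)
    (j' : N' →* G') (hj' : Function.Injective j')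
    (hji' : j'.comp i0' = i') (hjc' : π'.comp j' = jb.comp π0')
    (hjr' : j'.range = (fb.comp π').ker)
    -- the mod-K outer actions Θ of (G,j,π) and Θ' of (G',j',π')
    (Θ : Q →* OutNK i0)
    (hΘ : ∀ (g : G) (ν : ↥(autK i0)),
      (∀ n : N, j ((ν : MulAut N) n) = g * j n * g⁻¹) → Θ (π g) = mkNK i0 ν)
    (Θ' : Q →* OutNK i0')
    (hΘ' : ∀ (g' : G') (ν' : ↥(autK i0')),
      (∀ n' : N', j' ((ν' : MulAut N') n') = g' * j' n' * g'⁻¹) →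
        Θ' (π' g') = mkNK i0' ν')
    -- an isomorphism ψ between the P-subextensions
    (ψ : N' ≃* N)
    (hψi : ∀ k : K, ψ (i0' k) = i0 k)
    (hψp : ∀ n' : N', π0 (ψ n') = π0' n') :
    -- Θ and the transported action ψΘ' are Aut(KNP)-conjugate ...
    (∃ η : ↥(autK i0), (∀ k : K, (η : MulAut N) (i0 k) = i0 k) ∧
        (∀ n : N, π0 ((η : MulAut N) n) = π0 n) ∧
        ∀ (q : Q) (S' : ↥(autK i0')) (ν : ↥(autK i0)),
          mkNK i0' S' = Θ' q →
          (∀ n' : N', (ν : MulAut N) (ψ n') = ψ ((S' : MulAut N') n')) →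
          mkNK i0 ν = (mkNK i0 η)⁻¹ * Θ q * mkNK i0 η) ↔
    -- ... iff there is an iterated extension (G', j*, π') of (N,i₀,π₀) by (PQR)
    -- with Q-main extension (G',i',π') and mod-K outer action Θ
    (∃ jstar : N →* G', Function.Injective jstar ∧
        π'.comp jstar = jb.comp π0 ∧
        jstar.range = (fb.comp π').ker ∧
        jstar.comp i0 = i' ∧
        ∀ (g' : G') (ν : ↥(autK i0)),
          (∀ n : N, jstar ((ν : MulAut N) n) = g' * jstar n * g'⁻¹) →
          Θ (π' g') = mkNK i0 ν) := by
  constructor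
  · -- forward direction
    rintro ⟨η, hη1, hη2, hconj⟩
    set η' : N ≃* N := (η : MulAut N) with hη'def
    have hη1s : ∀ k, η'.symm (i0 k) = i0 k := by
      intro k
      have : η'.symm (η' (i0 k)) = η'.symm (i0 k) := by rw [hη1 k]
      rw [η'.symm_apply_apply] at this
      exact this.symm
    -- the new embedding jstar = j' ∘ ψ.symm ∘ η'.symm
    set e : N ≃* N' := η'.symm.trans ψ.symm with hedef
    refine ⟨j'.comp e.toMonoidHom, ?_, ?_, ?_, ?_, ?_⟩
    · exact fun a b hab => e.injective (hj' hab)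
    · ext n
      show π' (j' (ψ.symm (η'.symm n))) = jb (π0 n)
      have h1 : π' (j' (ψ.symm (η'.symm n))) = jb (π0' (ψ.symm (η'.symm n))) :=
        DFunLike.congr_fun hjc' _
      have h2 : π0' (ψ.symm (η'.symm n)) = π0 (η'.symm n) := by
        rw [← hψp (ψ.symm (η'.symm n)), ψ.apply_symm_apply]
      have h3 : π0 (η'.symm n) = π0 n := by
        have := hη2 (η'.symm n)
        rw [show (η : MulAut N) (η'.symm n) = η' (η'.symm n) from rfl,
          η'.apply_symm_apply] at this
        exact this.symm
      rw [h1, h2, h3]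
    · rw [← hjr']
      ext g'
      simp only [MonoidHom.mem_range, MonoidHom.comp_apply, MulEquiv.coe_toMonoidHom]
      constructor
      · rintro ⟨n, rfl⟩; exact ⟨e n, rfl⟩
      · rintro ⟨n', rfl⟩; exact ⟨e.symm n', by rw [e.apply_symm_apply]⟩
    · ext k
      show j' (ψ.symm (η'.symm (i0 k))) = i' k
      rw [hη1s k, fix_symm ψ hψi k]
      exact DFunLike.congr_fun hji' k
    · intro g' ν hν
      -- the element η⁻¹ * ν * η of autK i0
      set tel : ↥(autK i0) := η⁻¹ * ν * η with hteldef
      have htel : ∀ x : N, (tel : MulAut N) x = η'.symm ((ν : MulAut N) (η' x)) := by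
        intro x
        rfl
      -- the transported automorphism S' of N'
      set S'eq : N' ≃* N' := (ψ.trans ((tel : MulAut N) : N ≃* N)).trans ψ.symm
        with hS'def
      have hS'apply : ∀ n' : N', S'eq n' = ψ.symm ((tel : MulAut N) (ψ n')) :=
        fun _ => rfl
      have hS'mem : (S'eq : MulAut N') ∈ autK i0' := by
        intro n'
        have h1 : S'eq n' ∈ i0'.range ↔ (tel : MulAut N) (ψ n') ∈ i0.range := by
          rw [← range_iff ψ hψi (S'eq n'), hS'apply, ψ.apply_symm_apply]
        rw [h1, tel.2 (ψ n'), range_iff ψ hψi n']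
      have hΘ'S : Θ' (π' g') = mkNK i0' ⟨S'eq, hS'mem⟩ := by
        apply hΘ' g'
        intro n'
        show j' (S'eq n') = g' * j' n' * g'⁻¹
        have h1 : j' (S'eq n') = j' (ψ.symm (η'.symm ((ν : MulAut N) (η' (ψ n'))))) := by
          rw [hS'apply, htel]
        have h2 := hν (η' (ψ n'))
        have h3 : j' (ψ.symm (η'.symm (η' (ψ n')))) = j' n' := by
          rw [η'.symm_apply_apply, ψ.symm_apply_apply]
        calc j' (S'eq n') = j'.comp e.toMonoidHom ((ν : MulAut N) (η' (ψ n'))) := h1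
          _ = g' * j'.comp e.toMonoidHom (η' (ψ n')) * g'⁻¹ := h2
          _ = g' * j' n' * g'⁻¹ := by
              rw [show j'.comp e.toMonoidHom (η' (ψ n'))
                  = j' (ψ.symm (η'.symm (η' (ψ n')))) from rfl, h3]
      have hcc : ∀ n' : N', (tel : MulAut N) (ψ n') = ψ (S'eq n') := by
        intro n'
        rw [hS'apply, ψ.apply_symm_apply]
      have hmain := hconj (π' g') ⟨S'eq, hS'mem⟩ tel hΘ'S.symm hcc
      rw [hteldef, map_mul, map_mul, map_inv] at hmain
      exact (mul_left_cancel (mul_right_cancel hmain)).symm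
  · -- backward direction
    rintro ⟨jstar, hsinj, hsc, hsr, hsi, hsΘ⟩
    have hrange : j'.range = jstar.range := hjr'.trans hsr.symm
    set e1 : N ≃* jstar.range := MonoidHom.ofInjective hsinj with he1def
    set e2 : N' ≃* j'.range := MonoidHom.ofInjective hj' with he2def
    set η : N ≃* N :=
      ψ.symm.trans (e2.trans ((MulEquiv.subgroupCongr hrange).trans e1.symm))
      with hηdef
    have hkey : ∀ n : N, jstar (η n) = j' (ψ.symm n) := by
      intro n
      show jstar (e1.symm (MulEquiv.subgroupCongr hrange (e2 (ψ.symm n)))) = _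
      rw [MonoidHom.apply_ofInjective_symm hsinj]
      rw [MulEquiv.subgroupCongr_apply]
      exact MonoidHom.ofInjective_apply hj'
    have hηi : ∀ k, η (i0 k) = i0 k := by
      intro k
      apply hsinj
      rw [hkey, fix_symm ψ hψi k]
      have h1 : j' (i0' k) = i' k := DFunLike.congr_fun hji' k
      have h2 : jstar (i0 k) = i' k := DFunLike.congr_fun hsi k
      rw [h1, h2]
    have hηp : ∀ n, π0 (η n) = π0 n := by
      intro n
      apply hjb
      have h1 : jb (π0 (η n)) = π' (jstar (η n)) := (DFunLike.congr_fun hsc (η n)).symm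
      have h2 : π' (j' (ψ.symm n)) = jb (π0' (ψ.symm n)) := DFunLike.congr_fun hjc' _
      have h3 : π0' (ψ.symm n) = π0 n := by
        rw [← hψp (ψ.symm n), ψ.apply_symm_apply]
      have h4 : jb (π0 n) = π' (jstar n) := (DFunLike.congr_fun hsc n).symm
      rw [h1, hkey, h2, h3]
    refine ⟨⟨(η : MulAut N), mem_autK_of_fix i0 η hηi⟩, hηi, hηp, ?_⟩
    intro q S' ν hS' hνψ
    obtain ⟨g', hg'⟩ := hπ' q
    rw [← hg'] at hS' ⊢
    -- conjugation by g' on jstar.range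
    haveI : jstar.range.Normal := by rw [hsr]; exact MonoidHom.normal_ker _
    set ν₀eq : N ≃* N :=
      e1.trans (((MulAut.conjNormal g' : MulAut jstar.range) :
        jstar.range ≃* jstar.range).trans e1.symm) with hν₀def
    have hν₀ : ∀ n, jstar (ν₀eq n) = g' * jstar n * g'⁻¹ := by
      intro n
      show jstar (e1.symm (MulAut.conjNormal g' (e1 n))) = _
      rw [MonoidHom.apply_ofInjective_symm hsinj, MulAut.conjNormal_apply]
      rw [show (↑(e1 n) : G') = jstar n from MonoidHom.ofInjective_apply hsinj]
    have hi0i' : ∀ k, jstar (i0 k) = i' k := fun k => DFunLike.congr_fun hsi k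
    have hν₀mem : (ν₀eq : MulAut N) ∈ autK i0 := by
      intro n
      have h1 : ν₀eq n ∈ i0.range ↔ jstar (ν₀eq n) ∈ i'.range :=
        (range_iff_hom jstar hsinj hi0i' (ν₀eq n)).symm
      have h2 : (g' * jstar n * g'⁻¹ ∈ i'.range) ↔ (jstar n ∈ i'.range) := by
        rw [hker']
        simp only [MonoidHom.mem_ker, map_mul, map_inv]
        constructor
        · intro h
          have : π' (jstar n) = (π' g')⁻¹ * 1 * π' g' := by
            rw [← h]; group
          rw [this]; group
        · intro h; rw [h]; group
      rw [h1, hν₀ n, h2, range_iff_hom jstar hsinj hi0i' n]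
    set ν₀ : ↥(autK i0) := ⟨(ν₀eq : MulAut N), hν₀mem⟩ with hν₀el
    have hΘq : Θ (π' g') = mkNK i0 ν₀ := hsΘ g' ν₀ hν₀
    -- the element η̂⁻¹ * ν₀ * η̂
    set ηel : ↥(autK i0) := ⟨(η : MulAut N), mem_autK_of_fix i0 η hηi⟩ with hηel
    set tel : ↥(autK i0) := ηel⁻¹ * ν₀ * ηel with hteldef
    have htel : ∀ x : N, (tel : MulAut N) x = η.symm (ν₀eq (η x)) := fun _ => rfl
    -- the conjugation automorphism S'₀ of N'
    set S'₀eq : N' ≃* N' := (ψ.trans ((tel : MulAut N) : N ≃* N)).trans ψ.symm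
      with hS'₀def
    have hS'₀apply : ∀ n' : N', S'₀eq n' = ψ.symm (η.symm (ν₀eq (η (ψ n')))) :=
      fun _ => rfl
    have hS'₀mem : (S'₀eq : MulAut N') ∈ autK i0' := by
      intro n'
      have h1 : S'₀eq n' ∈ i0'.range ↔ (tel : MulAut N) (ψ n') ∈ i0.range := by
        rw [← range_iff ψ hψi (S'₀eq n')]
        rw [show S'₀eq n' = ψ.symm ((tel : MulAut N) (ψ n')) from rfl,
          ψ.apply_symm_apply]
      rw [h1, tel.2 (ψ n'), range_iff ψ hψi n']
    have hΘ'S : Θ' (π' g') = mkNK i0' ⟨S'₀eq, hS'₀mem⟩ := by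
      apply hΘ' g'
      intro n'
      show j' (S'₀eq n') = g' * j' n' * g'⁻¹
      rw [hS'₀apply]
      have h1 : j' (ψ.symm (η.symm (ν₀eq (η (ψ n')))))
          = jstar (η (η.symm (ν₀eq (η (ψ n'))))) := (hkey _).symm
      rw [h1, η.apply_symm_apply, hν₀, hkey, ψ.symm_apply_apply]
    -- compare S' with S'₀
    have hSS : mkNK i0' ⟨S'₀eq, hS'₀mem⟩ = mkNK i0' S' := hΘ'S.symm.trans hS'.symm
    have hSS' : QuotientGroup.mk' (cInn i0') ⟨S'₀eq, hS'₀mem⟩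
        = QuotientGroup.mk' (cInn i0') S' := hSS
    rw [QuotientGroup.mk'_eq_mk'] at hSS'
    obtain ⟨c, hcmem, hcs⟩ := hSS'
    obtain ⟨k, hk⟩ := hcmem
    set cel : ↥(autK i0) := ⟨MulAut.conj (i0 k), conj_i0_mem i0 k⟩ with hceldef
    have hcel1 : mkNK i0 cel = 1 := (QuotientGroup.eq_one_iff cel).mpr ⟨k, rfl⟩
    -- the key identity ν = tel * cel
    have hνtel : ν = tel * cel := by
      apply Subtype.ext
      apply MulEquiv.ext
      intro n
      have hL : (ν : MulAut N) n = ψ ((S' : MulAut N') (ψ.symm n)) := by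
        have := hνψ (ψ.symm n)
        rw [ψ.apply_symm_apply] at this
        exact this
      have hSc : (S' : MulAut N') (ψ.symm n)
          = S'₀eq (MulAut.conj (i0' k) (ψ.symm n)) := by
        rw [← hcs]
        show ((⟨S'₀eq, hS'₀mem⟩ * c : ↥(autK i0')) : MulAut N') (ψ.symm n) = _
        rw [Subgroup.coe_mul, MulAut.mul_apply, hk]
      have hconjψ : ψ (MulAut.conj (i0' k) (ψ.symm n)) = i0 k * n * (i0 k)⁻¹ := by
        rw [MulAut.conj_apply, map_mul, map_mul, map_inv, hψi, ψ.apply_symm_apply]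
      have hR : ((tel * cel : ↥(autK i0)) : MulAut N) n
          = η.symm (ν₀eq (η (i0 k * n * (i0 k)⁻¹))) := by
        rw [Subgroup.coe_mul, MulAut.mul_apply]
        rw [show ((cel : ↥(autK i0)) : MulAut N) n = i0 k * n * (i0 k)⁻¹ from rfl]
        exact htel _
      rw [hL, hSc, hR]
      rw [show S'₀eq (MulAut.conj (i0' k) (ψ.symm n))
          = ψ.symm ((tel : MulAut N) (ψ (MulAut.conj (i0' k) (ψ.symm n)))) from rfl]
      rw [ψ.apply_symm_apply, hconjψ]
      exact htel _
    rw [hνtel, map_mul, hcel1, mul_one, hteldef, map_mul, map_mul, map_inv, hΘq]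

end IES
end
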